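/- arXiv:math/0002212 — 5 statements merged into one kernel-verified Lean document; each statement's English description precedes it below -/
import Mathlib

section
/- For non-zero subspaces U, V, W of R^n, the maximum angle satisfies the triangle inequality: ∠_M(U,W) ≤ ∠_M(U,V) + ∠_M(V,W). -/
/-! Angles between subspaces of `ℝⁿ` (with the standard inner product).
`∠(u,v) = arccos(⟪u,v⟫/(‖u‖‖v‖))` is `InnerProductGeometry.angle`.
The angle of a non-zero vector with a non-zero subspace is the minimum (infimum)
of the angles with non-zero vectors of the subspace, and the maximum angle
`∠_M(U,V)` of a subspace `U` with respect to a subspace `V` is the maximum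
(supremum) over non-zero `u ∈ U` of `∠(u,V)`. -/

open InnerProductGeometry Real

section AngleTriangle

variable {E : Type*} [NormedAddCommGroup E] [InnerProductSpace ℝ E]

local notation "⟪" x ", " y "⟫" => @inner ℝ _ _ x y

private lemma inner_ge_aux {x y z : E} (hx : ‖x‖ = 1) (hy : ‖y‖ = 1) (hz : ‖z‖ = 1) :
    ⟪x, y⟫ * ⟪y, z⟫ - Real.sqrt (1 - ⟪x, y⟫ ^ 2) * Real.sqrt (1 - ⟪y, z⟫ ^ 2) ≤ ⟪x, z⟫ := by
  set a : ℝ := ⟪x, y⟫ with ha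
  set b : ℝ := ⟪y, z⟫ with hb
  set x' := x - a • y with hx'
  set z' := z - b • y with hz'
  have hxx : ⟪x, x⟫ = 1 := by rw [real_inner_self_eq_norm_sq, hx]; norm_num
  have hyy : ⟪y, y⟫ = 1 := by rw [real_inner_self_eq_norm_sq, hy]; norm_num
  have hzz : ⟪z, z⟫ = 1 := by rw [real_inner_self_eq_norm_sq, hz]; norm_num
  have h1 : ⟪x', x'⟫ = 1 - a ^ 2 := by
    simp only [hx', inner_sub_left, inner_sub_right, real_inner_smul_left,
      real_inner_smul_right, hxx, hyy]
    rw [real_inner_comm x y, ← ha]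
    ring
  have h2 : ⟪z', z'⟫ = 1 - b ^ 2 := by
    simp only [hz', inner_sub_left, inner_sub_right, real_inner_smul_left,
      real_inner_smul_right, hzz, hyy]
    have hb' : b = ⟪z, y⟫ := hb.trans (real_inner_comm z y)
    rw [← hb']
    ring
  have h3 : ⟪x', z'⟫ = ⟪x, z⟫ - a * b := by
    simp only [hx', hz', inner_sub_left, inner_sub_right, real_inner_smul_left,
      real_inner_smul_right, hyy]
    rw [← ha, ← hb]
    ring
  have hnx : ‖x'‖ = Real.sqrt (1 - a ^ 2) := by
    rw [← h1, real_inner_self_eq_norm_sq, Real.sqrt_sq (norm_nonneg _)]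
  have hnz : ‖z'‖ = Real.sqrt (1 - b ^ 2) := by
    rw [← h2, real_inner_self_eq_norm_sq, Real.sqrt_sq (norm_nonneg _)]
  have hcs : -(‖x'‖ * ‖z'‖) ≤ ⟪x', z'⟫ := neg_le_of_abs_le (abs_real_inner_le_norm x' z')
  rw [h3, hnx, hnz] at hcs
  linarith

private lemma angle_triangle_unit {x y z : E} (hx : ‖x‖ = 1) (hy : ‖y‖ = 1) (hz : ‖z‖ = 1) :
    angle x z ≤ angle x y + angle y z := by
  rcases le_or_gt π (angle x y + angle y z) with h | h
  · exact (angle_le_pi x z).trans h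
  · have h0 : 0 ≤ angle x y + angle y z := by
      have := angle_nonneg x y; have := angle_nonneg y z; linarith
    have hmem1 : angle x z ∈ Set.Icc 0 π := ⟨angle_nonneg x z, angle_le_pi x z⟩
    have hmem2 : angle x y + angle y z ∈ Set.Icc 0 π := ⟨h0, h.le⟩
    rw [← Real.strictAntiOn_cos.le_iff_ge hmem2 hmem1]
    have hca : Real.cos (angle x y) = ⟪x, y⟫ := by rw [cos_angle, hx, hy]; simp
    have hcb : Real.cos (angle y z) = ⟪y, z⟫ := by rw [cos_angle, hy, hz]; simp
    have hcc : Real.cos (angle x z) = ⟪x, z⟫ := by rw [cos_angle, hx, hz]; simp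
    have hsa : Real.sin (angle x y) = Real.sqrt (1 - ⟪x, y⟫ ^ 2) := by
      rw [Real.sin_eq_sqrt_one_sub_cos_sq (angle_nonneg x y) (angle_le_pi x y), hca]
    have hsb : Real.sin (angle y z) = Real.sqrt (1 - ⟪y, z⟫ ^ 2) := by
      rw [Real.sin_eq_sqrt_one_sub_cos_sq (angle_nonneg y z) (angle_le_pi y z), hcb]
    rw [Real.cos_add, hca, hcb, hcc, hsa, hsb]
    exact inner_ge_aux hx hy hz

lemma angle_triangle' (x y z : E) : angle x z ≤ angle x y + angle y z := by
  rcases eq_or_ne x 0 with rfl | hx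
  · rw [angle_zero_left, angle_zero_left]
    linarith [angle_nonneg y z]
  rcases eq_or_ne z 0 with rfl | hz
  · rw [angle_zero_right, angle_zero_right]
    linarith [angle_nonneg x y]
  rcases eq_or_ne y 0 with rfl | hy
  · rw [angle_zero_right, angle_zero_left]
    linarith [angle_le_pi x z]
  have hx' : (0:ℝ) < ‖x‖⁻¹ := inv_pos.mpr (norm_pos_iff.mpr ‹_›)
  have hy' : (0:ℝ) < ‖y‖⁻¹ := inv_pos.mpr (norm_pos_iff.mpr ‹_›)
  have hz' : (0:ℝ) < ‖z‖⁻¹ := inv_pos.mpr (norm_pos_iff.mpr ‹_›)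
  have e1 : angle x z = angle (‖x‖⁻¹ • x) (‖z‖⁻¹ • z) := by
    rw [angle_smul_left_of_pos _ _ hx', angle_smul_right_of_pos _ _ hz']
  have e2 : angle x y = angle (‖x‖⁻¹ • x) (‖y‖⁻¹ • y) := by
    rw [angle_smul_left_of_pos _ _ hx', angle_smul_right_of_pos _ _ hy']
  have e3 : angle y z = angle (‖y‖⁻¹ • y) (‖z‖⁻¹ • z) := by
    rw [angle_smul_left_of_pos _ _ hy', angle_smul_right_of_pos _ _ hz']
  rw [e1, e2, e3]
  exact angle_triangle_unit (norm_smul_inv_norm hx) (norm_smul_inv_norm hy)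
    (norm_smul_inv_norm hz)


end AngleTriangle

/-- The angle `∠(u,V)` of a vector with a subspace. -/
noncomputable def angleToSub {n : ℕ} (u : EuclideanSpace ℝ (Fin n))
    (V : Submodule ℝ (EuclideanSpace ℝ (Fin n))) : ℝ :=
  sInf {θ : ℝ | ∃ v ∈ V, v ≠ 0 ∧ θ = InnerProductGeometry.angle u v}

/-- The maximum angle `∠_M(U,V)` of a subspace `U` with respect to a subspace `V`. -/
noncomputable def maxAngle {n : ℕ}
    (U V : Submodule ℝ (EuclideanSpace ℝ (Fin n))) : ℝ :=
  sSup {θ : ℝ | ∃ u ∈ U, u ≠ 0 ∧ θ = angleToSub u V}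

section aux

variable {n : ℕ}

private lemma angleSet_nonempty (u : EuclideanSpace ℝ (Fin n))
    {V : Submodule ℝ (EuclideanSpace ℝ (Fin n))} (hV : V ≠ ⊥) :
    {θ : ℝ | ∃ v ∈ V, v ≠ 0 ∧ θ = InnerProductGeometry.angle u v}.Nonempty := by
  obtain ⟨v, hv, hv0⟩ := Submodule.exists_mem_ne_zero_of_ne_bot hV
  exact ⟨_, v, hv, hv0, rfl⟩

private lemma angleSet_bddBelow (u : EuclideanSpace ℝ (Fin n))
    (V : Submodule ℝ (EuclideanSpace ℝ (Fin n))) :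
    BddBelow {θ : ℝ | ∃ v ∈ V, v ≠ 0 ∧ θ = InnerProductGeometry.angle u v} := by
  refine ⟨0, ?_⟩
  rintro θ ⟨v, -, -, rfl⟩
  exact angle_nonneg u v

private lemma angleToSub_le_pi (u : EuclideanSpace ℝ (Fin n))
    {V : Submodule ℝ (EuclideanSpace ℝ (Fin n))} (hV : V ≠ ⊥) :
    angleToSub u V ≤ π := by
  obtain ⟨v, hv, hv0⟩ := Submodule.exists_mem_ne_zero_of_ne_bot hV
  exact (csInf_le (angleSet_bddBelow u V) ⟨v, hv, hv0, rfl⟩).trans (angle_le_pi u v)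

private lemma maxAngleSet_bddAbove {U V : Submodule ℝ (EuclideanSpace ℝ (Fin n))}
    (hV : V ≠ ⊥) :
    BddAbove {θ : ℝ | ∃ u ∈ U, u ≠ 0 ∧ θ = angleToSub u V} := by
  refine ⟨π, ?_⟩
  rintro θ ⟨u, -, -, rfl⟩
  exact angleToSub_le_pi u hV

end aux

/-- For non-zero subspaces `U, V, W` of `ℝⁿ`, the maximum angle satisfies
the triangle inequality `∠_M(U,W) ≤ ∠_M(U,V) + ∠_M(V,W)`. -/
theorem maxAngle_triangle {n : ℕ} (U V W : Submodule ℝ (EuclideanSpace ℝ (Fin n)))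
    (hU : U ≠ ⊥) (hV : V ≠ ⊥) (hW : W ≠ ⊥) :
    maxAngle U W ≤ maxAngle U V + maxAngle V W := by
  obtain ⟨u₀, hu₀, hu₀0⟩ := Submodule.exists_mem_ne_zero_of_ne_bot hU
  have hne : {θ : ℝ | ∃ u ∈ U, u ≠ 0 ∧ θ = angleToSub u W}.Nonempty :=
    ⟨_, u₀, hu₀, hu₀0, rfl⟩
  rw [show maxAngle U W = sSup {θ : ℝ | ∃ u ∈ U, u ≠ 0 ∧ θ = angleToSub u W} from rfl]
  apply csSup_le hne
  rintro θ ⟨u, huU, hu0, rfl⟩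
  have key : angleToSub u W - maxAngle V W ≤ angleToSub u V := by
    apply le_csInf (angleSet_nonempty u hV)
    rintro θ ⟨v, hvV, hv0, rfl⟩
    have step : angleToSub u W - InnerProductGeometry.angle u v ≤ angleToSub v W := by
      apply le_csInf (angleSet_nonempty v hW)
      rintro θ ⟨w, hwW, hw0, rfl⟩
      have h1 : angleToSub u W ≤ InnerProductGeometry.angle u w :=
        csInf_le (angleSet_bddBelow u W) ⟨w, hwW, hw0, rfl⟩
      have h2 := angle_triangle' u v w
      linarith
    have h3 : angleToSub v W ≤ maxAngle V W :=
      le_csSup (maxAngleSet_bddAbove hW) ⟨v, hvV, hv0, rfl⟩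
    linarith
  have h4 : angleToSub u V ≤ maxAngle U V :=
    le_csSup (maxAngleSet_bddAbove hV) ⟨u, huU, hu0, rfl⟩
  linarith
end

section
/- If U and V are subspaces of R^n of the same dimension, then the maximum angle is symmetric: ∠_M(U,V) = ∠_M(V,U). -/
open InnerProductGeometry Module RealInnerProductSpace

private lemma arccos_anti' {x y : ℝ} (h : x ≤ y) : Real.arccos y ≤ Real.arccos x := by
  unfold Real.arccos
  have := Real.monotone_arcsin h
  linarith

/-- Formula for `angleToSub` via the orthogonal projection. -/
private lemma angleToSub_eq {n : ℕ} (u : EuclideanSpace ℝ (Fin n))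
    (V : Submodule ℝ (EuclideanSpace ℝ (Fin n))) (hu : u ≠ 0) (hV : V ≠ ⊥) :
    angleToSub u V =
      Real.arccos (‖(Submodule.orthogonalProjectionOnto V u : EuclideanSpace ℝ (Fin n))‖ / ‖u‖) := by
  set P : EuclideanSpace ℝ (Fin n) := (Submodule.orthogonalProjectionOnto V u : EuclideanSpace ℝ (Fin n))
    with hPdef
  have hunorm : (0:ℝ) < ‖u‖ := norm_pos_iff.mpr hu
  have hinner : ∀ v ∈ V, ⟪u, v⟫ = ⟪P, v⟫ := by
    intro v hv
    exact (Submodule.inner_orthogonalProjectionOnto_eq_of_mem_right (K := V) (⟨v, hv⟩ : V) u).symm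
  have hmem : Real.arccos (‖P‖ / ‖u‖) ∈
      {θ : ℝ | ∃ v ∈ V, v ≠ 0 ∧ θ = InnerProductGeometry.angle u v} := by
    by_cases hP0 : P = 0
    · obtain ⟨v, hvV, hv0⟩ := Submodule.exists_mem_ne_zero_of_ne_bot hV
      refine ⟨v, hvV, hv0, ?_⟩
      rw [InnerProductGeometry.angle, hinner v hvV, hP0, inner_zero_left, zero_div,
        norm_zero, zero_div]
    · refine ⟨P, Submodule.coe_mem _, hP0, ?_⟩
      rw [InnerProductGeometry.angle, hinner P (Submodule.coe_mem _),
        real_inner_self_eq_norm_mul_norm]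
      have hPn : ‖P‖ ≠ 0 := norm_ne_zero_iff.mpr hP0
      congr 1
      field_simp
  have hlb : ∀ θ ∈ {θ : ℝ | ∃ v ∈ V, v ≠ 0 ∧ θ = InnerProductGeometry.angle u v},
      Real.arccos (‖P‖ / ‖u‖) ≤ θ := by
    rintro θ ⟨v, hvV, hv0, rfl⟩
    rw [InnerProductGeometry.angle]
    apply arccos_anti'
    have hvnorm : (0:ℝ) < ‖v‖ := norm_pos_iff.mpr hv0
    have h1 : ⟪u, v⟫ ≤ ‖P‖ * ‖v‖ := by
      rw [hinner v hvV]; exact real_inner_le_norm P v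
    rw [div_le_div_iff₀ (by positivity) hunorm]
    nlinarith
  exact IsLeast.csInf_eq ⟨hmem, hlb⟩

/-- Formula for `maxAngle` via a minimizer of the norm of the projection on the unit
sphere of `U`. -/
private lemma maxAngle_eq {n : ℕ} (U V : Submodule ℝ (EuclideanSpace ℝ (Fin n)))
    (hV : V ≠ ⊥) (x₀ : U) (hx₀ : ‖x₀‖ = 1)
    (hmin : ∀ x : U, ‖x‖ = 1 →
      ‖(Submodule.orthogonalProjectionOnto V ((x₀ : EuclideanSpace ℝ (Fin n))) : EuclideanSpace ℝ (Fin n))‖ ≤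
      ‖(Submodule.orthogonalProjectionOnto V ((x : EuclideanSpace ℝ (Fin n))) : EuclideanSpace ℝ (Fin n))‖) :
    maxAngle U V =
      Real.arccos
        ‖(Submodule.orthogonalProjectionOnto V ((x₀ : EuclideanSpace ℝ (Fin n))) :
          EuclideanSpace ℝ (Fin n))‖ := by
  have hx₀E : ‖(x₀ : EuclideanSpace ℝ (Fin n))‖ = 1 := by rwa [Submodule.norm_coe]
  have hx₀ne : (x₀ : EuclideanSpace ℝ (Fin n)) ≠ 0 := by
    intro h0; rw [h0, norm_zero] at hx₀E; norm_num at hx₀E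
  have hmem : Real.arccos
      ‖(Submodule.orthogonalProjectionOnto V ((x₀ : EuclideanSpace ℝ (Fin n))) :
        EuclideanSpace ℝ (Fin n))‖ ∈
      {θ : ℝ | ∃ u ∈ U, u ≠ 0 ∧ θ = angleToSub u V} := by
    refine ⟨(x₀ : EuclideanSpace ℝ (Fin n)), x₀.2, hx₀ne, ?_⟩
    rw [angleToSub_eq _ V hx₀ne hV, hx₀E, div_one]
  have hub : ∀ θ ∈ {θ : ℝ | ∃ u ∈ U, u ≠ 0 ∧ θ = angleToSub u V},
      θ ≤ Real.arccos
        ‖(Submodule.orthogonalProjectionOnto V ((x₀ : EuclideanSpace ℝ (Fin n))) :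
          EuclideanSpace ℝ (Fin n))‖ := by
    rintro θ ⟨u, huU, hu0, rfl⟩
    rw [angleToSub_eq u V hu0 hV]
    apply arccos_anti'
    have hunorm : (0:ℝ) < ‖u‖ := norm_pos_iff.mpr hu0
    set x : U := (⟨‖u‖, hunorm.ne'⟩ : {r : ℝ // r ≠ 0}).1⁻¹ • (⟨u, huU⟩ : U) with hxdef
    have hxnorm : ‖x‖ = 1 := by
      rw [hxdef, norm_smul]
      have : ‖(⟨u, huU⟩ : U)‖ = ‖u‖ := rfl
      rw [this]
      simp [abs_of_pos (inv_pos.mpr hunorm), inv_mul_cancel₀ hunorm.ne']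
    have hxE : (x : EuclideanSpace ℝ (Fin n)) = ‖u‖⁻¹ • u := rfl
    have := hmin x hxnorm
    rw [hxE, map_smul] at this
    have hsm : ((‖u‖⁻¹ • Submodule.orthogonalProjectionOnto V u : V) : EuclideanSpace ℝ (Fin n))
        = ‖u‖⁻¹ • (Submodule.orthogonalProjectionOnto V u : EuclideanSpace ℝ (Fin n)) := rfl
    rw [hsm, norm_smul] at this
    rw [div_eq_inv_mul]
    calc ‖(Submodule.orthogonalProjectionOnto V ((x₀ : EuclideanSpace ℝ (Fin n))) :
            EuclideanSpace ℝ (Fin n))‖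
        ≤ ‖‖u‖⁻¹‖ * ‖(Submodule.orthogonalProjectionOnto V u : EuclideanSpace ℝ (Fin n))‖ := this
      _ = ‖u‖⁻¹ * ‖(Submodule.orthogonalProjectionOnto V u : EuclideanSpace ℝ (Fin n))‖ := by
          rw [norm_inv, norm_norm]
  exact IsGreatest.csSup_eq ⟨hmem, hub⟩

/-- Key analytic fact: if `T : A →L[ℝ] B` with `finrank A = finrank B`, then there is a unit
vector `x` such that `‖T x‖` is at most `‖T† y‖` for every unit vector `y`. -/
private lemma key_lemma {A B : Type*} [NormedAddCommGroup A] [InnerProductSpace ℝ A]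
    [NormedAddCommGroup B] [InnerProductSpace ℝ B]
    [FiniteDimensional ℝ A] [FiniteDimensional ℝ B] [Nontrivial A] [Nontrivial B]
    (T : A →L[ℝ] B) (hrank : finrank ℝ A = finrank ℝ B) :
    ∃ x : A, ‖x‖ = 1 ∧ ∀ y : B, ‖y‖ = 1 →
      ‖T x‖ ≤ ‖(ContinuousLinearMap.adjoint T) y‖ := by
  by_cases hinj : Function.Injective T
  · -- T is bijective
    have hinj' : Function.Injective (T : A →ₗ[ℝ] B) := hinj
    have hsurj : Function.Surjective (T : A →ₗ[ℝ] B) :=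
      (LinearMap.injective_iff_surjective_of_finrank_eq_finrank hrank).mp hinj'
    let e : A ≃L[ℝ] B :=
      (LinearEquiv.ofBijective (T : A →ₗ[ℝ] B) ⟨hinj', hsurj⟩).toContinuousLinearEquiv
    have he : ∀ x : A, e x = T x := fun _ => rfl
    let g : B →L[ℝ] A := e.symm.toContinuousLinearMap
    have hgf : ∀ x : A, g (T x) = x := fun x => by
      show e.symm (T x) = x
      rw [← he]; exact e.symm_apply_apply x
    have hfg : ∀ y : B, T (g y) = y := fun y => by
      show T (e.symm y) = y
      rw [← he]; exact e.apply_symm_apply y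
    -- maximizer of ‖g ·‖ on the unit sphere of B
    have hcs : IsCompact (Metric.sphere (0 : B) 1) := isCompact_sphere 0 1
    have hne : (Metric.sphere (0 : B) 1).Nonempty :=
      NormedSpace.sphere_nonempty.mpr zero_le_one
    have hcont : ContinuousOn (fun y : B => ‖g y‖) (Metric.sphere (0 : B) 1) :=
      (continuous_norm.comp g.continuous).continuousOn
    obtain ⟨y₁, hy₁mem, hy₁max⟩ := hcs.exists_isMaxOn hne hcont
    have hy₁ : ‖y₁‖ = 1 := by simpa using hy₁mem
    set c := ‖g y₁‖ with hcdef
    have hy₁ne : y₁ ≠ 0 := by intro h0; rw [h0, norm_zero] at hy₁; norm_num at hy₁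
    have hgy₁ne : g y₁ ≠ 0 := by
      intro h0
      apply hy₁ne
      rw [← hfg y₁, h0, map_zero]
    have hc0 : 0 < c := norm_pos_iff.mpr hgy₁ne
    have hgle : ∀ y : B, ‖g y‖ ≤ c * ‖y‖ := by
      intro y
      rcases eq_or_ne y 0 with rfl | hy0
      · simp
      · have hyn : (0:ℝ) < ‖y‖ := norm_pos_iff.mpr hy0
        have hmem' : (‖y‖⁻¹ • y) ∈ Metric.sphere (0 : B) 1 := by
          simp [norm_smul, abs_of_pos (inv_pos.mpr hyn), inv_mul_cancel₀ hyn.ne']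
        have h3 : ‖g (‖y‖⁻¹ • y)‖ ≤ c := hy₁max hmem'
        rw [map_smul, norm_smul, norm_inv, norm_norm] at h3
        calc ‖g y‖ = ‖y‖ * (‖y‖⁻¹ * ‖g y‖) := by field_simp
          _ ≤ ‖y‖ * c := by
              apply mul_le_mul_of_nonneg_left h3 hyn.le
          _ = c * ‖y‖ := mul_comm _ _
    have hgnorm : ‖g‖ ≤ c := g.opNorm_le_bound hc0.le hgle
    refine ⟨c⁻¹ • g y₁, ?_, ?_⟩
    · rw [norm_smul, norm_inv, norm_norm, ← hcdef, inv_mul_cancel₀ hc0.ne']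
    · intro y hy
      have hTx : ‖T (c⁻¹ • g y₁)‖ = c⁻¹ := by
        rw [map_smul, hfg, norm_smul, hy₁, norm_inv, norm_norm, mul_one]
      rw [hTx]
      -- `g† ∘ T† = id`
      have hcomp : T ∘L g = ContinuousLinearMap.id ℝ B := by
        ext y'; exact hfg y'
      have hadjcomp : (ContinuousLinearMap.adjoint g).comp (ContinuousLinearMap.adjoint T)
          = ContinuousLinearMap.id ℝ B := by
        rw [← ContinuousLinearMap.adjoint_comp, hcomp, ContinuousLinearMap.adjoint_id]
      have hadj : (ContinuousLinearMap.adjoint g) ((ContinuousLinearMap.adjoint T) y) = y := by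
        have := congrArg (fun f => f y) hadjcomp
        simpa using this
      have hgadjnorm : ‖ContinuousLinearMap.adjoint g‖ = ‖g‖ :=
        LinearIsometryEquiv.norm_map ContinuousLinearMap.adjoint g
      have h1 : (1:ℝ) ≤ c * ‖(ContinuousLinearMap.adjoint T) y‖ := by
        calc (1:ℝ) = ‖y‖ := hy.symm
          _ = ‖(ContinuousLinearMap.adjoint g) ((ContinuousLinearMap.adjoint T) y)‖ := by
              rw [hadj]
          _ ≤ ‖ContinuousLinearMap.adjoint g‖ * ‖(ContinuousLinearMap.adjoint T) y‖ :=
              ContinuousLinearMap.le_opNorm _ _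
          _ ≤ c * ‖(ContinuousLinearMap.adjoint T) y‖ := by
              apply mul_le_mul_of_nonneg_right _ (norm_nonneg _)
              rw [hgadjnorm]; exact hgnorm
      have h2 := mul_le_mul_of_nonneg_left h1 (inv_nonneg.mpr hc0.le)
      calc c⁻¹ = c⁻¹ * 1 := (mul_one _).symm
        _ ≤ c⁻¹ * (c * ‖(ContinuousLinearMap.adjoint T) y‖) := h2
        _ = ‖(ContinuousLinearMap.adjoint T) y‖ := by
            field_simp
  · -- T has a kernel
    rw [Function.not_injective_iff] at hinj
    obtain ⟨a, b, hab, hne⟩ := hinj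
    set x := a - b with hxdef
    have hx0 : x ≠ 0 := sub_ne_zero.mpr hne
    have hTx : T x = 0 := by rw [hxdef, map_sub, hab, sub_self]
    have hxn : (0:ℝ) < ‖x‖ := norm_pos_iff.mpr hx0
    refine ⟨‖x‖⁻¹ • x, ?_, ?_⟩
    · rw [norm_smul, norm_inv, norm_norm, inv_mul_cancel₀ hxn.ne']
    · intro y _
      rw [map_smul, hTx, smul_zero, norm_zero]
      exact norm_nonneg _

/-- If `U` and `V` are subspaces of `ℝⁿ` of the same dimension, then the
maximum angle is symmetric: `∠_M(U,V) = ∠_M(V,U)`. -/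
theorem maxAngle_symm_of_finrank_eq {n : ℕ}
    (U V : Submodule ℝ (EuclideanSpace ℝ (Fin n)))
    (h : Module.finrank ℝ U = Module.finrank ℝ V) :
    maxAngle U V = maxAngle V U := by
  by_cases hU : U = ⊥
  · have hV : V = ⊥ := by
      apply Submodule.finrank_eq_zero.mp
      rw [← h, hU, finrank_bot]
    rw [hU, hV]
  · have hV : V ≠ ⊥ := by
      intro hV
      apply hU
      apply Submodule.finrank_eq_zero.mp
      rw [h, hV, finrank_bot]
    haveI : Nontrivial U := Submodule.nontrivial_iff_ne_bot.mpr hU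
    haveI : Nontrivial V := Submodule.nontrivial_iff_ne_bot.mpr hV
    set T : U →L[ℝ] V := (Submodule.orthogonalProjectionOnto V).comp U.subtypeL with hTdef
    set S : V →L[ℝ] U := (Submodule.orthogonalProjectionOnto U).comp V.subtypeL with hSdef
    have hadj : S = ContinuousLinearMap.adjoint T := by
      rw [ContinuousLinearMap.eq_adjoint_iff]
      intro v u
      show ⟪Submodule.orthogonalProjectionOnto U ((v : EuclideanSpace ℝ (Fin n))), u⟫
        = ⟪v, Submodule.orthogonalProjectionOnto V ((u : EuclideanSpace ℝ (Fin n)))⟫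
      rw [Submodule.inner_orthogonalProjectionOnto_eq_of_mem_right, Submodule.inner_orthogonalProjectionOnto_eq_of_mem_left]
    have hadj' : T = ContinuousLinearMap.adjoint S := by
      rw [hadj, ContinuousLinearMap.adjoint_adjoint]
    -- norms of T/S in terms of projections
    have hTnorm : ∀ x : U, ‖T x‖
        = ‖(Submodule.orthogonalProjectionOnto V ((x : EuclideanSpace ℝ (Fin n))) :
            EuclideanSpace ℝ (Fin n))‖ := fun x => rfl
    have hSnorm : ∀ y : V, ‖S y‖
        = ‖(Submodule.orthogonalProjectionOnto U ((y : EuclideanSpace ℝ (Fin n))) :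
            EuclideanSpace ℝ (Fin n))‖ := fun y => rfl
    -- minimizers on unit spheres
    have hcsU : IsCompact (Metric.sphere (0 : U) 1) := isCompact_sphere 0 1
    have hneU : (Metric.sphere (0 : U) 1).Nonempty :=
      NormedSpace.sphere_nonempty.mpr zero_le_one
    obtain ⟨x₀, hx₀mem, hx₀min⟩ := hcsU.exists_isMinOn hneU
      ((continuous_norm.comp T.continuous).continuousOn :
        ContinuousOn (fun x : U => ‖T x‖) _)
    have hx₀ : ‖x₀‖ = 1 := by simpa using hx₀mem
    have hcsV : IsCompact (Metric.sphere (0 : V) 1) := isCompact_sphere 0 1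
    have hneV : (Metric.sphere (0 : V) 1).Nonempty :=
      NormedSpace.sphere_nonempty.mpr zero_le_one
    obtain ⟨y₀, hy₀mem, hy₀min⟩ := hcsV.exists_isMinOn hneV
      ((continuous_norm.comp S.continuous).continuousOn :
        ContinuousOn (fun y : V => ‖S y‖) _)
    have hy₀ : ‖y₀‖ = 1 := by simpa using hy₀mem
    have hx₀min' : ∀ x : U, ‖x‖ = 1 → ‖T x₀‖ ≤ ‖T x‖ := by
      intro x hx
      exact hx₀min (by simpa using hx)
    have hy₀min' : ∀ y : V, ‖y‖ = 1 → ‖S y₀‖ ≤ ‖S y‖ := by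
      intro y hy
      exact hy₀min (by simpa using hy)
    -- formulas for both maxAngles
    have hUV : maxAngle U V = Real.arccos ‖T x₀‖ := by
      rw [hTnorm]
      exact maxAngle_eq U V hV x₀ hx₀ (fun x hx => by
        rw [← hTnorm, ← hTnorm]; exact hx₀min' x hx)
    have hVU : maxAngle V U = Real.arccos ‖S y₀‖ := by
      rw [hSnorm]
      exact maxAngle_eq V U hU y₀ hy₀ (fun y hy => by
        rw [← hSnorm, ← hSnorm]; exact hy₀min' y hy)
    rw [hUV, hVU]
    congr 1
    -- the two minima agree
    obtain ⟨x, hx, hxle⟩ := key_lemma T h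
    obtain ⟨y, hy, hyle⟩ := key_lemma S h.symm
    have h1 : ‖T x₀‖ ≤ ‖S y₀‖ := by
      calc ‖T x₀‖ ≤ ‖T x‖ := hx₀min' x hx
        _ ≤ ‖(ContinuousLinearMap.adjoint T) y₀‖ := hxle y₀ hy₀
        _ = ‖S y₀‖ := by rw [← hadj]
    have h2 : ‖S y₀‖ ≤ ‖T x₀‖ := by
      calc ‖S y₀‖ ≤ ‖S y‖ := hy₀min' y hy
        _ ≤ ‖(ContinuousLinearMap.adjoint S) x₀‖ := hyle x₀ hx₀
        _ = ‖T x₀‖ := by rw [← hadj']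
    linarith
end

section
/- For non-zero subspaces U and V of R^n, the minimum angle between U and V equals the minimum angle between any non-zero vector of U^⊥ and any non-zero vector of V^⊥: ∠_m(U,V) = min over non-zero u ∈ U^⊥, non-zero v ∈ V^⊥ of ∠(u,v). -/
open scoped Classical

/-- The minimum angle `∠_m(U,V)` between two subspaces. -/
noncomputable def minAngle {n : ℕ}
    (U V : Submodule ℝ (EuclideanSpace ℝ (Fin n))) : ℝ :=
  if U ⊔ V = ⊤ then
    sInf {θ : ℝ | ∃ u ∈ U ⊓ (U ⊓ V)ᗮ, u ≠ 0 ∧ θ = angleToSub u (V ⊓ (U ⊓ V)ᗮ)}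
  else 0

namespace MinAngleAux

open Submodule InnerProductGeometry Real
open scoped RealInnerProductSpace

variable {E : Type*} [NormedAddCommGroup E] [InnerProductSpace ℝ E] [FiniteDimensional ℝ E]

/-- The set of inner products of unit vectors from `A` and `B`. -/
def pairSet (A B : Submodule ℝ E) : Set ℝ :=
  {c | ∃ x ∈ A, ‖x‖ = 1 ∧ ∃ y ∈ B, ‖y‖ = 1 ∧ c = ⟪x, y⟫}

/-- The cosine of the minimal angle. -/
noncomputable def csup (A B : Submodule ℝ E) : ℝ := sSup (pairSet A B)

lemma pairSet_le_one {A B : Submodule ℝ E} {c : ℝ} (h : c ∈ pairSet A B) : c ≤ 1 := by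
  obtain ⟨x, -, hx, y, -, hy, rfl⟩ := h
  have := real_inner_le_norm x y
  rw [hx, hy] at this; linarith

lemma bddAbove_pairSet (A B : Submodule ℝ E) : BddAbove (pairSet A B) :=
  ⟨1, fun _ hc => pairSet_le_one hc⟩

lemma exists_norm_one {A : Submodule ℝ E} (hA : A ≠ ⊥) : ∃ x ∈ A, ‖x‖ = 1 := by
  obtain ⟨x, hx, hx0⟩ := Submodule.exists_mem_ne_zero_of_ne_bot hA
  exact ⟨‖x‖⁻¹ • x, A.smul_mem _ hx, by simpa using norm_smul_inv_norm (𝕜 := ℝ) hx0⟩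

lemma mem_pairSet_of_ne_zero {A B : Submodule ℝ E} {u v : E} (hu : u ∈ A) (hu0 : u ≠ 0)
    (hv : v ∈ B) (hv0 : v ≠ 0) : ⟪u, v⟫ / (‖u‖ * ‖v‖) ∈ pairSet A B := by
  have hun : ‖u‖ ≠ 0 := norm_ne_zero_iff.mpr hu0
  have hvn : ‖v‖ ≠ 0 := norm_ne_zero_iff.mpr hv0
  refine ⟨‖u‖⁻¹ • u, A.smul_mem _ hu, ?_, ‖v‖⁻¹ • v, B.smul_mem _ hv, ?_, ?_⟩
  · simpa using norm_smul_inv_norm (𝕜 := ℝ) hu0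
  · simpa using norm_smul_inv_norm (𝕜 := ℝ) hv0
  · rw [real_inner_smul_left, real_inner_smul_right]
    field_simp

lemma exists_max (A B : Submodule ℝ E) (hA : A ≠ ⊥) (hB : B ≠ ⊥) :
    ∃ x ∈ A, ‖x‖ = 1 ∧ ∃ y ∈ B, ‖y‖ = 1 ∧ ⟪x, y⟫ = csup A B := by
  obtain ⟨x₀, hx₀, hx₀n⟩ := exists_norm_one hA
  obtain ⟨y₀, hy₀, hy₀n⟩ := exists_norm_one hB
  have hKA : IsCompact ((A : Set E) ∩ Metric.sphere 0 1) :=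
    (isCompact_sphere (0 : E) 1).inter_left A.closed_of_finiteDimensional
  have hKB : IsCompact ((B : Set E) ∩ Metric.sphere 0 1) :=
    (isCompact_sphere (0 : E) 1).inter_left B.closed_of_finiteDimensional
  have hK : IsCompact (((A : Set E) ∩ Metric.sphere 0 1) ×ˢ ((B : Set E) ∩ Metric.sphere 0 1)) :=
    hKA.prod hKB
  have hne : (((A : Set E) ∩ Metric.sphere 0 1) ×ˢ ((B : Set E) ∩ Metric.sphere 0 1)).Nonempty :=
    ⟨(x₀, y₀), ⟨hx₀, mem_sphere_zero_iff_norm.mpr hx₀n⟩, ⟨hy₀, mem_sphere_zero_iff_norm.mpr hy₀n⟩⟩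
  obtain ⟨p, hp, hmax⟩ := hK.exists_isMaxOn hne
    ((continuous_inner (𝕜 := ℝ) (E := E)).continuousOn)
  have hg : IsGreatest (pairSet A B) ⟪p.1, p.2⟫ := by
    constructor
    · exact ⟨p.1, hp.1.1, mem_sphere_zero_iff_norm.mp hp.1.2, p.2, hp.2.1,
        mem_sphere_zero_iff_norm.mp hp.2.2, rfl⟩
    · rintro c ⟨x, hx, hxn, y, hy, hyn, rfl⟩
      exact isMaxOn_iff.mp hmax (x, y)
        ⟨⟨hx, mem_sphere_zero_iff_norm.mpr hxn⟩, ⟨hy, mem_sphere_zero_iff_norm.mpr hyn⟩⟩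
  exact ⟨p.1, hp.1.1, mem_sphere_zero_iff_norm.mp hp.1.2, p.2, hp.2.1,
    mem_sphere_zero_iff_norm.mp hp.2.2, hg.csSup_eq.symm⟩

lemma csup_nonneg {A B : Submodule ℝ E} (hA : A ≠ ⊥) (hB : B ≠ ⊥) : 0 ≤ csup A B := by
  obtain ⟨x, hx, hxn⟩ := exists_norm_one hA
  obtain ⟨y, hy, hyn⟩ := exists_norm_one hB
  have h1 : ⟪x, y⟫ ≤ csup A B :=
    le_csSup (bddAbove_pairSet A B) ⟨x, hx, hxn, y, hy, hyn, rfl⟩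
  have h2 : ⟪-x, y⟫ ≤ csup A B :=
    le_csSup (bddAbove_pairSet A B) ⟨-x, A.neg_mem hx, by simpa using hxn, y, hy, hyn, rfl⟩
  rw [inner_neg_left] at h2
  linarith

lemma proj_eq_smul {A B : Submodule ℝ E} {x y : E} (hx : x ∈ A) (hxn : ‖x‖ = 1)
    (hy : y ∈ B) (hyn : ‖y‖ = 1)
    (hmax : ∀ c ∈ pairSet A B, c ≤ ⟪x, y⟫) :
    ((orthogonalProjection A y : E)) = ⟪x, y⟫ • x := by
  set c := ⟪x, y⟫ with hc
  set p : E := (orthogonalProjection A y : E) with hp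
  have hpA : p ∈ A := SetLike.coe_mem _
  have horth : y - p ∈ Aᗮ := Submodule.sub_starProjection_mem_orthogonal y
  have hxp : ⟪x, y - p⟫ = 0 := (Submodule.mem_orthogonal _ _).mp horth x hx
  have h1 : c = ⟪x, p⟫ := by
    have hsub : ⟪x, y - p⟫ = ⟪x, y⟫ - ⟪x, p⟫ := inner_sub_right x y p
    rw [hxp] at hsub; rw [hc]; linarith
  have hpy : ⟪p, y⟫ = ‖p‖ ^ 2 := by
    have h0 : ⟪p, y - p⟫ = 0 := (Submodule.mem_orthogonal _ _).mp horth p hpA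
    have hsub : ⟪p, y - p⟫ = ⟪p, y⟫ - ⟪p, p⟫ := inner_sub_right p y p
    have hself : ⟪p, p⟫ = ‖p‖ ^ 2 := real_inner_self_eq_norm_sq p
    rw [h0, hself] at hsub; linarith
  by_cases hp0 : p = 0
  · have hc0 : c = 0 := by rw [h1, hp0, inner_zero_right]
    rw [hp0, hc0, zero_smul]
  · have hpn : (0 : ℝ) < ‖p‖ := norm_pos_iff.mpr hp0
    have hle : ‖p‖ ≤ c := by
      have hmem : ⟪‖p‖⁻¹ • p, y⟫ ∈ pairSet A B :=
        ⟨‖p‖⁻¹ • p, A.smul_mem _ hpA, by simpa using norm_smul_inv_norm (𝕜 := ℝ) hp0,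
          y, hy, hyn, rfl⟩
      have hh := hmax _ hmem
      rw [real_inner_smul_left, hpy] at hh
      have : ‖p‖⁻¹ * ‖p‖ ^ 2 = ‖p‖ := by field_simp
      linarith [this ▸ hh]
    have hge : c ≤ ‖p‖ := by
      calc c = ⟪x, p⟫ := h1
        _ ≤ ‖x‖ * ‖p‖ := real_inner_le_norm x p
        _ = ‖p‖ := by rw [hxn, one_mul]
    have heqn : ‖p‖ = c := le_antisymm hle hge
    have heq : ⟪x, p⟫ = ‖x‖ * ‖p‖ := by rw [hxn, one_mul, heqn, ← h1]
    have hkey := inner_eq_norm_mul_iff_real.mp heq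
    rw [hxn, one_smul, heqn] at hkey
    exact hkey.symm

lemma csup_lt_one {A B : Submodule ℝ E} (hA : A ≠ ⊥) (hB : B ≠ ⊥) (hAB : A ⊓ B = ⊥) :
    csup A B < 1 := by
  obtain ⟨x, hx, hxn, y, hy, hyn, hc⟩ := exists_max A B hA hB
  rw [← hc]
  have hle : ⟪x, y⟫ ≤ 1 := by
    have := real_inner_le_norm x y
    rw [hxn, hyn] at this; linarith
  rcases lt_or_eq_of_le hle with h | h
  · exact h
  · exfalso
    have heq : ⟪x, y⟫ = ‖x‖ * ‖y‖ := by rw [hxn, hyn, one_mul]; exact h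
    have hkey := inner_eq_norm_mul_iff_real.mp heq
    rw [hxn, hyn, one_smul, one_smul] at hkey
    have hxb : x ∈ A ⊓ B := ⟨hx, hkey ▸ hy⟩
    rw [hAB, Submodule.mem_bot] at hxb
    rw [hxb, norm_zero] at hxn
    norm_num at hxn

/-- The key construction: from a maximizing pair for `(A,B)` one constructs unit vectors
in `Aᗮ` and `Bᗮ` (lying inside `A ⊔ B`) with the same inner product. -/
lemma exists_dual_pair (A B : Submodule ℝ E) (hA : A ≠ ⊥) (hB : B ≠ ⊥) (hAB : A ⊓ B = ⊥) :
    ∃ a ∈ Aᗮ ⊓ (A ⊔ B), ‖a‖ = 1 ∧ ∃ b ∈ Bᗮ ⊓ (A ⊔ B), ‖b‖ = 1 ∧ ⟪a, b⟫ = csup A B := by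
  obtain ⟨x, hx, hxn, y, hy, hyn, hc⟩ := exists_max A B hA hB
  have hmax : ∀ c' ∈ pairSet A B, c' ≤ ⟪x, y⟫ := by
    rw [hc]; exact fun c' h => le_csSup (bddAbove_pairSet A B) h
  have hmax' : ∀ c' ∈ pairSet B A, c' ≤ ⟪y, x⟫ := by
    rintro c' ⟨u, hu, hun, v, hv, hvn, rfl⟩
    calc ⟪u, v⟫ = ⟪v, u⟫ := real_inner_comm v u
      _ ≤ ⟪x, y⟫ := hmax _ ⟨v, hv, hvn, u, hu, hun, rfl⟩
      _ = ⟪y, x⟫ := real_inner_comm y x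
  set c := ⟪x, y⟫ with hcdef
  have hc0 : 0 ≤ c := by rw [hc]; exact csup_nonneg hA hB
  have hc1 : c < 1 := by rw [hc]; exact csup_lt_one hA hB hAB
  have hxx : ⟪x, x⟫ = 1 := by rw [real_inner_self_eq_norm_sq, hxn]; norm_num
  have hyy : ⟪y, y⟫ = 1 := by rw [real_inner_self_eq_norm_sq, hyn]; norm_num
  have hyx : ⟪y, x⟫ = c := by rw [real_inner_comm]
  have hPx : (orthogonalProjection A y : E) = c • x := proj_eq_smul hx hxn hy hyn hmax
  have hPy : (orthogonalProjection B x : E) = c • y := by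
    have := proj_eq_smul hy hyn hx hxn hmax'
    rw [hyx] at this; exact this
  set a₀ : E := c • x - y with ha₀
  set b₀ : E := x - c • y with hb₀
  have ha₀U : a₀ ∈ Aᗮ := by
    have := Aᗮ.neg_mem (show y - (orthogonalProjection A y : E) ∈ Aᗮ from
      Submodule.sub_starProjection_mem_orthogonal (K := A) y)
    rw [hPx] at this
    simpa [ha₀, neg_sub] using this
  have hb₀V : b₀ ∈ Bᗮ := by
    have : x - (orthogonalProjection B x : E) ∈ Bᗮ :=
      Submodule.sub_starProjection_mem_orthogonal (K := B) x
    rw [hPy] at this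
    exact this
  have ha₀S : a₀ ∈ A ⊔ B := sub_mem (mem_sup_left (A.smul_mem c hx)) (mem_sup_right hy)
  have hb₀S : b₀ ∈ A ⊔ B := sub_mem (mem_sup_left hx) (mem_sup_right (B.smul_mem c hy))
  have hip : ⟪a₀, b₀⟫ = c * (1 - c ^ 2) := by
    simp only [ha₀, hb₀, inner_sub_left, inner_sub_right, real_inner_smul_left,
      real_inner_smul_right, hxx, hyy, hyx, ← hcdef]
    ring
  have hna : ⟪a₀, a₀⟫ = 1 - c ^ 2 := by
    simp only [ha₀, inner_sub_left, inner_sub_right, real_inner_smul_left,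
      real_inner_smul_right, hxx, hyy, hyx, ← hcdef]
    ring
  have hnb : ⟪b₀, b₀⟫ = 1 - c ^ 2 := by
    simp only [hb₀, inner_sub_left, inner_sub_right, real_inner_smul_left,
      real_inner_smul_right, hxx, hyy, hyx, ← hcdef]
    ring
  have hpos : (0 : ℝ) < 1 - c ^ 2 := by nlinarith
  set s : ℝ := Real.sqrt (1 - c ^ 2) with hs
  have hs0 : 0 < s := Real.sqrt_pos.mpr hpos
  have hs2 : s ^ 2 = 1 - c ^ 2 := Real.sq_sqrt (le_of_lt hpos)
  have hnorma : ‖a₀‖ = s := by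
    rw [hs, ← hna, real_inner_self_eq_norm_sq, Real.sqrt_sq (norm_nonneg _)]
  have hnormb : ‖b₀‖ = s := by
    rw [hs, ← hnb, real_inner_self_eq_norm_sq, Real.sqrt_sq (norm_nonneg _)]
  refine ⟨s⁻¹ • a₀, ⟨Aᗮ.smul_mem _ ha₀U, (A ⊔ B).smul_mem _ ha₀S⟩, ?_,
    s⁻¹ • b₀, ⟨Bᗮ.smul_mem _ hb₀V, (A ⊔ B).smul_mem _ hb₀S⟩, ?_, ?_⟩
  · rw [norm_smul, hnorma, Real.norm_eq_abs, abs_of_pos (inv_pos.mpr hs0)]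
    field_simp
  · rw [norm_smul, hnormb, Real.norm_eq_abs, abs_of_pos (inv_pos.mpr hs0)]
    field_simp
  · have hss : s * s = 1 - c ^ 2 := by nlinarith
    have hsne : s ≠ 0 := ne_of_gt hs0
    rw [real_inner_smul_left, real_inner_smul_right, hip, ← hc, ← hss]
    try field_simp
    try ring

lemma arccos_antitone {x y : ℝ} (h : x ≤ y) : Real.arccos y ≤ Real.arccos x := by
  rw [Real.arccos_eq_pi_div_two_sub_arcsin, Real.arccos_eq_pi_div_two_sub_arcsin]
  have := Real.monotone_arcsin h
  linarith

lemma angle_ge {A B : Submodule ℝ E} {u v : E} (hu : u ∈ A) (hu0 : u ≠ 0)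
    (hv : v ∈ B) (hv0 : v ≠ 0) : Real.arccos (csup A B) ≤ angle u v := by
  have hmem := mem_pairSet_of_ne_zero hu hu0 hv hv0
  have hle : ⟪u, v⟫ / (‖u‖ * ‖v‖) ≤ csup A B := le_csSup (bddAbove_pairSet A B) hmem
  exact arccos_antitone hle

lemma angle_max_eq {x y : E} (hxn : ‖x‖ = 1) (hyn : ‖y‖ = 1) :
    angle x y = Real.arccos ⟪x, y⟫ := by
  show Real.arccos _ = _
  rw [hxn, hyn]
  norm_num

lemma sInf_angle_pair (A B : Submodule ℝ E) (hA : A ≠ ⊥) (hB : B ≠ ⊥) :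
    sInf {θ : ℝ | ∃ u ∈ A, u ≠ 0 ∧ ∃ v ∈ B, v ≠ 0 ∧ θ = angle u v} =
      Real.arccos (csup A B) := by
  obtain ⟨x, hx, hxn, y, hy, hyn, hc⟩ := exists_max A B hA hB
  have hx0 : x ≠ 0 := fun h => by simp [h] at hxn
  have hy0 : y ≠ 0 := fun h => by simp [h] at hyn
  apply IsLeast.csInf_eq
  constructor
  · exact ⟨x, hx, hx0, y, hy, hy0, by rw [angle_max_eq hxn hyn, hc]⟩
  · rintro θ ⟨u, hu, hu0, v, hv, hv0, rfl⟩
    exact angle_ge hu hu0 hv hv0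

end MinAngleAux

section Euclidean

open Submodule InnerProductGeometry Real MinAngleAux
open scoped RealInnerProductSpace

variable {n : ℕ}

local notation "E" => EuclideanSpace ℝ (Fin n)

lemma angleToSub_ge {A B : Submodule ℝ E} (hB : B ≠ ⊥) {u : E} (hu : u ∈ A) (hu0 : u ≠ 0) :
    Real.arccos (csup A B) ≤ angleToSub u B := by
  obtain ⟨v, hv, hv0⟩ := Submodule.exists_mem_ne_zero_of_ne_bot hB
  refine le_csInf ⟨InnerProductGeometry.angle u v, ⟨v, hv, hv0, rfl⟩⟩ ?_
  rintro θ ⟨w, hw, hw0, rfl⟩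
  exact angle_ge hu hu0 hw hw0

lemma sInf_angleToSub (A B : Submodule ℝ E) (hA : A ≠ ⊥) (hB : B ≠ ⊥) :
    sInf {θ : ℝ | ∃ u ∈ A, u ≠ 0 ∧ θ = angleToSub u B} = Real.arccos (csup A B) := by
  obtain ⟨x, hx, hxn, y, hy, hyn, hc⟩ := exists_max A B hA hB
  have hx0 : x ≠ 0 := fun h => by simp [h] at hxn
  have hy0 : y ≠ 0 := fun h => by simp [h] at hyn
  have hmaxeq : angleToSub x B = Real.arccos (csup A B) := by
    apply le_antisymm
    · apply csInf_le
      · exact ⟨0, fun θ hθ => by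
          obtain ⟨w, hw, hw0, rfl⟩ := hθ
          exact InnerProductGeometry.angle_nonneg x w⟩
      · exact ⟨y, hy, hy0, by rw [angle_max_eq hxn hyn, hc]⟩
    · exact angleToSub_ge hB hx hx0
  apply IsLeast.csInf_eq
  constructor
  · exact ⟨x, hx, hx0, hmaxeq.symm⟩
  · rintro θ ⟨u, hu, hu0, rfl⟩
    exact angleToSub_ge hB hu hu0

lemma sup_compl_eq {U W : Submodule ℝ E} (hWU : W ≤ U) : W ⊔ (U ⊓ Wᗮ) = U := by
  apply le_antisymm (sup_le hWU inf_le_left)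
  intro u hu
  have h1 : (orthogonalProjection W u : E) ∈ W := SetLike.coe_mem _
  have h2 : u - (orthogonalProjection W u : E) ∈ U ⊓ Wᗮ :=
    ⟨sub_mem hu (hWU h1), Submodule.sub_starProjection_mem_orthogonal u⟩
  have heq : u = (orthogonalProjection W u : E) + (u - (orthogonalProjection W u : E)) := by
    abel
  rw [heq]
  exact add_mem (mem_sup_left h1) (mem_sup_right h2)

lemma le_of_inf_orth_bot {U W : Submodule ℝ E} (hWU : W ≤ U) (h : U ⊓ Wᗮ = ⊥) : U ≤ W := by
  intro u hu
  have h2 : u - (orthogonalProjection W u : E) ∈ U ⊓ Wᗮ :=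
    ⟨sub_mem hu (hWU (SetLike.coe_mem _)), Submodule.sub_starProjection_mem_orthogonal u⟩
  rw [h, Submodule.mem_bot, sub_eq_zero] at h2
  rw [h2]
  exact SetLike.coe_mem _

end Euclidean

/-- For non-zero subspaces `U` and `V` of `ℝⁿ`, the minimum angle between
`U` and `V` equals the minimum of the angles between non-zero vectors of `U^⊥` and
non-zero vectors of `V^⊥`. -/
theorem minAngle_eq_inf_angle_orthogonal {n : ℕ}
    (U V : Submodule ℝ (EuclideanSpace ℝ (Fin n))) (hU : U ≠ ⊥) (hV : V ≠ ⊥) :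
    minAngle U V =
      sInf {θ : ℝ | ∃ u ∈ Uᗮ, u ≠ 0 ∧ ∃ v ∈ Vᗮ, v ≠ 0 ∧
        θ = InnerProductGeometry.angle u v} := by
  classical
  open Submodule InnerProductGeometry Real MinAngleAux in
  rw [minAngle]
  by_cases hT : U ⊔ V = ⊤
  · rw [if_pos hT]
    by_cases hUV : U ≤ V
    · -- then V = ⊤, both sides are sInf ∅ = 0
      have hVtop : V = ⊤ := by rw [← hT, sup_eq_right.mpr hUV]
      have h1 : U ⊓ (U ⊓ V)ᗮ = ⊥ := by
        rw [inf_eq_left.mpr hUV]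
        exact U.inf_orthogonal_eq_bot
      have hLset : {θ : ℝ | ∃ u ∈ U ⊓ (U ⊓ V)ᗮ, u ≠ 0 ∧ θ = angleToSub u (V ⊓ (U ⊓ V)ᗮ)}
          = (∅ : Set ℝ) := by
        ext θ; simp only [Set.mem_setOf_eq, Set.mem_empty_iff_false, iff_false]
        rintro ⟨u, hu, hu0, -⟩
        rw [h1, Submodule.mem_bot] at hu
        exact hu0 hu
      have hRset : {θ : ℝ | ∃ u ∈ Uᗮ, u ≠ 0 ∧ ∃ v ∈ Vᗮ, v ≠ 0 ∧
          θ = InnerProductGeometry.angle u v} = (∅ : Set ℝ) := by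
        ext θ; simp only [Set.mem_setOf_eq, Set.mem_empty_iff_false, iff_false]
        rintro ⟨u, -, -, v, hv, hv0, -⟩
        rw [hVtop, Submodule.top_orthogonal_eq_bot, Submodule.mem_bot] at hv
        exact hv0 hv
      rw [hLset, hRset]
    · by_cases hVU : V ≤ U
      · -- then U = ⊤
        have hUtop : U = ⊤ := by rw [← hT, sup_eq_left.mpr hVU]
        have hVntop : V ≠ ⊤ := fun h => hUV (h ▸ le_top)
        have hVo : Vᗮ ≠ ⊥ := fun h => hVntop (Submodule.orthogonal_eq_bot_iff.mp h)
        have hW : U ⊓ V = V := inf_eq_right.mpr hVU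
        have hUc : U ⊓ (U ⊓ V)ᗮ = Vᗮ := by rw [hW, hUtop, top_inf_eq]
        have hVc : V ⊓ (U ⊓ V)ᗮ = ⊥ := by rw [hW]; exact V.inf_orthogonal_eq_bot
        have hRset : {θ : ℝ | ∃ u ∈ Uᗮ, u ≠ 0 ∧ ∃ v ∈ Vᗮ, v ≠ 0 ∧
            θ = InnerProductGeometry.angle u v} = (∅ : Set ℝ) := by
          ext θ; simp only [Set.mem_setOf_eq, Set.mem_empty_iff_false, iff_false]
          rintro ⟨u, hu, hu0, -⟩
          rw [hUtop, Submodule.top_orthogonal_eq_bot, Submodule.mem_bot] at hu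
          exact hu0 hu
        have hzero : ∀ u : EuclideanSpace ℝ (Fin n), angleToSub u (V ⊓ (U ⊓ V)ᗮ) = 0 := by
          intro u
          rw [hVc]
          have : {θ : ℝ | ∃ v ∈ (⊥ : Submodule ℝ (EuclideanSpace ℝ (Fin n))), v ≠ 0 ∧
              θ = InnerProductGeometry.angle u v} = (∅ : Set ℝ) := by
            ext θ; simp only [Set.mem_setOf_eq, Set.mem_empty_iff_false, iff_false]
            rintro ⟨v, hv, hv0, -⟩
            rw [Submodule.mem_bot] at hv
            exact hv0 hv
          rw [angleToSub, this, Real.sInf_empty]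
        have hLset : {θ : ℝ | ∃ u ∈ U ⊓ (U ⊓ V)ᗮ, u ≠ 0 ∧ θ = angleToSub u (V ⊓ (U ⊓ V)ᗮ)}
            = {(0 : ℝ)} := by
          ext θ
          simp only [Set.mem_setOf_eq, Set.mem_singleton_iff]
          constructor
          · rintro ⟨u, -, -, rfl⟩
            exact hzero u
          · rintro rfl
            obtain ⟨u, hu, hu0⟩ := Submodule.exists_mem_ne_zero_of_ne_bot hVo
            exact ⟨u, hUc ▸ hu, hu0, (hzero u).symm⟩
        rw [hLset, hRset, Real.sInf_empty, csInf_singleton]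
      · -- main case
        set W : Submodule ℝ (EuclideanSpace ℝ (Fin n)) := U ⊓ V with hWdef
        have hWU : W ≤ U := inf_le_left
        have hWV : W ≤ V := inf_le_right
        have hUc : U ⊓ Wᗮ ≠ ⊥ := fun h => hUV (le_trans (le_of_inf_orth_bot hWU h) hWV)
        have hVc : V ⊓ Wᗮ ≠ ⊥ := fun h => hVU (le_trans (le_of_inf_orth_bot hWV h) hWU)
        have hUo : Uᗮ ≠ ⊥ := fun h =>
          hVU ((Submodule.orthogonal_eq_bot_iff.mp h) ▸ le_top)
        have hVo : Vᗮ ≠ ⊥ := fun h =>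
          hUV ((Submodule.orthogonal_eq_bot_iff.mp h) ▸ le_top)
        rw [sInf_angleToSub (U ⊓ Wᗮ) (V ⊓ Wᗮ) hUc hVc,
          MinAngleAux.sInf_angle_pair Uᗮ Vᗮ hUo hVo]
        congr 1
        have hUcVc_bot : (U ⊓ Wᗮ) ⊓ (V ⊓ Wᗮ) = ⊥ := by
          rw [eq_bot_iff]
          rintro x ⟨⟨hxU, hxW⟩, hxV, -⟩
          have : x ∈ W ⊓ Wᗮ := ⟨⟨hxU, hxV⟩, hxW⟩
          rwa [W.inf_orthogonal_eq_bot] at this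
        have hOrth_bot : Uᗮ ⊓ Vᗮ = ⊥ := by
          rw [Submodule.inf_orthogonal, hT, Submodule.top_orthogonal_eq_bot]
        have hsupW : (U ⊓ Wᗮ) ⊔ (V ⊓ Wᗮ) ≤ Wᗮ := sup_le inf_le_right inf_le_right
        have hsupO : Uᗮ ⊔ Vᗮ ≤ Wᗮ :=
          sup_le (Submodule.orthogonal_le hWU) (Submodule.orthogonal_le hWV)
        apply le_antisymm
        · obtain ⟨a, ⟨haO, haS⟩, han, b, ⟨hbO, hbS⟩, hbn, hab⟩ :=
            exists_dual_pair (U ⊓ Wᗮ) (V ⊓ Wᗮ) hUc hVc hUcVc_bot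
          have haU : a ∈ Uᗮ := by
            have h1 : a ∈ Wᗮ ⊓ (U ⊓ Wᗮ)ᗮ := ⟨hsupW haS, haO⟩
            rwa [Submodule.inf_orthogonal, sup_compl_eq hWU] at h1
          have hbV : b ∈ Vᗮ := by
            have h1 : b ∈ Wᗮ ⊓ (V ⊓ Wᗮ)ᗮ := ⟨hsupW hbS, hbO⟩
            rwa [Submodule.inf_orthogonal, sup_compl_eq hWV] at h1
          exact le_csSup (bddAbove_pairSet _ _) ⟨a, haU, han, b, hbV, hbn, hab.symm⟩
        · obtain ⟨a, ⟨haO, haS⟩, han, b, ⟨hbO, hbS⟩, hbn, hab⟩ :=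
            exists_dual_pair Uᗮ Vᗮ hUo hVo hOrth_bot
          have haU : a ∈ U ⊓ Wᗮ := by
            rw [Submodule.orthogonal_orthogonal] at haO
            exact ⟨haO, hsupO haS⟩
          have hbV : b ∈ V ⊓ Wᗮ := by
            rw [Submodule.orthogonal_orthogonal] at hbO
            exact ⟨hbO, hsupO hbS⟩
          exact le_csSup (bddAbove_pairSet _ _) ⟨a, haU, han, b, hbV, hbn, hab.symm⟩
  · rw [if_neg hT]
    -- non-transversal: both sides are 0
    have hne : (U ⊔ V)ᗮ ≠ ⊥ := by
      intro h
      exact hT (Submodule.orthogonal_eq_bot_iff.mp h)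
    obtain ⟨w, hw, hw0⟩ := Submodule.exists_mem_ne_zero_of_ne_bot hne
    have hwU : w ∈ Uᗮ := Submodule.orthogonal_le le_sup_left hw
    have hwV : w ∈ Vᗮ := Submodule.orthogonal_le le_sup_right hw
    symm
    apply IsLeast.csInf_eq
    constructor
    · exact ⟨w, hwU, hw0, w, hwV, hw0, (InnerProductGeometry.angle_self hw0).symm⟩
    · rintro θ ⟨u, -, -, v, -, -, rfl⟩
      exact InnerProductGeometry.angle_nonneg u v
end

section
/- Let U, V be transversally intersecting subspaces of R^n (U + V = R^n) with ∠_m(U,V) > ε > 0. Then there exist γ₀ > 0 and a constant C, depending only on ε, such that for all γ < γ₀, whenever subspaces U' and V' of the same dimensions as U and V respectively satisfy ∠_M(U,U') < γ and ∠_M(V,V') < γ, then U' and V' intersect transversally and ∠_M(U∩V, U'∩V') < Cγ. -/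
open scoped Classical

open InnerProductGeometry Module Real RealInnerProductSpace

variable {n : ℕ}
local notation "E" => EuclideanSpace ℝ (Fin n)

lemma proj_min (K : Submodule ℝ E) (x v : E) (hv : v ∈ K) :
    ‖x - (Submodule.orthogonalProjectionOnto K x : E)‖ ≤ ‖x - v‖ := by
  set p : E := (Submodule.orthogonalProjectionOnto K x : E)
  have hxp : x - p ∈ Kᗮ := Submodule.sub_starProjection_mem_orthogonal x
  have hmem : p - v ∈ K := K.sub_mem (Submodule.orthogonalProjectionOnto K x).2 hv
  have h : ⟪x - p, p - v⟫ = 0 := real_inner_comm (p - v) (x - p) ▸ hxp _ hmem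
  have : ‖x - v‖ ^ 2 = ‖x - p‖ ^ 2 + ‖p - v‖ ^ 2 := by
    have : x - v = (x - p) + (p - v) := by abel
    rw [this, norm_add_sq_real, h]; ring
  nlinarith [norm_nonneg (x - v), norm_nonneg (x - p), norm_nonneg (p - v), sq_nonneg (‖p - v‖)]

lemma angleToSub_nonneg (u : E) (K : Submodule ℝ E) : 0 ≤ angleToSub u K :=
  Real.sInf_nonneg fun _ ⟨_, _, _, hθ⟩ => hθ ▸ angle_nonneg _ _

lemma angleToSub_le_pi_s8 (u : E) (K : Submodule ℝ E) : angleToSub u K ≤ π := by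
  rcases Set.eq_empty_or_nonempty {θ : ℝ | ∃ v ∈ K, v ≠ 0 ∧ θ = InnerProductGeometry.angle u v} with h | ⟨θ, hθ⟩
  · rw [angleToSub, h, Real.sInf_empty]; exact pi_nonneg
  · refine le_trans (csInf_le ⟨0, fun _ ⟨_, _, _, h'⟩ => h' ▸ angle_nonneg _ _⟩ hθ) ?_
    obtain ⟨_, _, _, h'⟩ := hθ; exact h' ▸ angle_le_pi _ _

lemma angleToSub_le_angle (u : E) {K : Submodule ℝ E} {v : E} (hv : v ∈ K) (hv0 : v ≠ 0) :
    angleToSub u K ≤ InnerProductGeometry.angle u v :=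
  csInf_le ⟨0, fun _ ⟨_, _, _, h'⟩ => h' ▸ angle_nonneg _ _⟩ ⟨v, hv, hv0, rfl⟩

lemma maxAngle_nonneg (U K : Submodule ℝ E) : 0 ≤ maxAngle U K :=
  Real.sSup_nonneg fun _ ⟨_, _, _, hθ⟩ => hθ ▸ angleToSub_nonneg _ _

lemma maxAngle_le {U K : Submodule ℝ E} {b : ℝ} (hb : 0 ≤ b)
    (h : ∀ u ∈ U, u ≠ 0 → angleToSub u K ≤ b) : maxAngle U K ≤ b :=
  Real.sSup_le (fun _ ⟨u, hu, hu0, hθ⟩ => hθ ▸ h u hu hu0) hb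

lemma le_maxAngle {U : Submodule ℝ E} (K : Submodule ℝ E) {u : E} (hu : u ∈ U) (h0 : u ≠ 0) :
    angleToSub u K ≤ maxAngle U K :=
  le_csSup ⟨π, fun _ ⟨_, _, _, hθ⟩ => hθ ▸ angleToSub_le_pi_s8 _ _⟩ ⟨u, hu, h0, rfl⟩

lemma close_of_maxAngle_lt {U U' : Submodule ℝ E} (hU' : U' ≠ ⊥) {γ : ℝ}
    (h : maxAngle U U' < γ) {u : E} (hu : u ∈ U) :
    ‖u - (Submodule.orthogonalProjectionOnto U' u : E)‖ ≤ γ * ‖u‖ := by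
  have hγ0 : 0 ≤ γ := le_of_lt (lt_of_le_of_lt (maxAngle_nonneg U U') h)
  rcases eq_or_ne u 0 with rfl | hu0
  · simp
  have h1 : angleToSub u U' < γ := lt_of_le_of_lt (le_maxAngle U' hu hu0) h
  obtain ⟨v, hv, hv0⟩ := (Submodule.ne_bot_iff U').mp hU'
  have hne : Set.Nonempty {θ : ℝ | ∃ w ∈ U', w ≠ 0 ∧ θ = InnerProductGeometry.angle u w} :=
    ⟨InnerProductGeometry.angle u v, v, hv, hv0, rfl⟩
  obtain ⟨θ, ⟨w, hw, hw0, rfl⟩, hθγ⟩ := exists_lt_of_csInf_lt hne h1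
  set c : ℝ := ⟪u, w⟫ / (‖w‖ * ‖w‖) with hc
  have hcw : c • w ∈ U' := U'.smul_mem _ hw
  refine (proj_min U' u _ hcw).trans ?_
  have hnw : (0:ℝ) < ‖w‖ := norm_pos_iff.mpr hw0
  have hnu : (0:ℝ) < ‖u‖ := norm_pos_iff.mpr hu0
  have hcos : Real.cos (InnerProductGeometry.angle u w) = ⟪u, w⟫ / (‖u‖ * ‖w‖) :=
    InnerProductGeometry.cos_angle u w
  have hsq : ‖u - c • w‖ ^ 2 = ‖u‖^2 * (1 - Real.cos (InnerProductGeometry.angle u w)^2) := by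
    rw [norm_sub_sq_real, real_inner_smul_right, norm_smul, hcos, hc]
    rw [Real.norm_eq_abs]
    rw [mul_pow, sq_abs]
    field_simp
    ring
  have hsin0 : 0 ≤ Real.sin (InnerProductGeometry.angle u w) :=
    Real.sin_nonneg_of_nonneg_of_le_pi (InnerProductGeometry.angle_nonneg u w)
      (InnerProductGeometry.angle_le_pi u w)
  have hsinle : Real.sin (InnerProductGeometry.angle u w) < γ :=
    lt_of_le_of_lt (Real.sin_le (InnerProductGeometry.angle_nonneg u w)) hθγ
  have hsc := Real.sin_sq_add_cos_sq (InnerProductGeometry.angle u w)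
  have hs2 : Real.sin (InnerProductGeometry.angle u w) ^ 2 ≤ γ ^ 2 := by nlinarith
  have h2 : ‖u - c • w‖ ^ 2 ≤ (γ * ‖u‖)^2 := by
    nlinarith [mul_nonneg (sq_nonneg ‖u‖) (sub_nonneg.mpr hs2)]
  nlinarith [norm_nonneg (u - c • w), mul_nonneg hγ0 (norm_nonneg u)]

lemma gap_symm {A B : Submodule ℝ E} (hd : Module.finrank ℝ A = Module.finrank ℝ B) {δ : ℝ}
    (h0 : 0 ≤ δ) (h1 : δ < 1)
    (h : ∀ a ∈ A, ‖a - (Submodule.orthogonalProjectionOnto B a : E)‖ ≤ δ * ‖a‖) :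
    ∀ b ∈ B, ‖b - (Submodule.orthogonalProjectionOnto A b : E)‖ ≤ (δ / (1 - δ)) * ‖b‖ := by
  let f : A →ₗ[ℝ] B := (Submodule.orthogonalProjectionOnto B).toLinearMap.comp A.subtype
  have hfx : ∀ x : A, (f x : E) = (Submodule.orthogonalProjectionOnto B (x : E) : E) := fun _ => rfl
  have hinj : Function.Injective f := by
    refine LinearMap.ker_eq_bot.mp (LinearMap.ker_eq_bot'.mpr fun m hm => ?_)
    have h2 : (Submodule.orthogonalProjectionOnto B (m : E) : E) = 0 := by
      rw [← hfx, hm]; rfl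
    have h3 := h (m : E) m.2
    rw [h2, sub_zero] at h3
    have hm0 : (m : E) = 0 := by
      by_contra ha0
      have : (0:ℝ) < ‖(m : E)‖ := norm_pos_iff.mpr ha0
      nlinarith
    exact Subtype.ext hm0
  have hsurj := (LinearMap.injective_iff_surjective_of_finrank_eq_finrank hd).1 hinj
  intro b hb
  obtain ⟨a, ha⟩ := hsurj ⟨b, hb⟩
  have hPb : (Submodule.orthogonalProjectionOnto B (a : E) : E) = b := by
    rw [← hfx, ha]
  have h2 : ‖(a:E) - b‖ ≤ δ * ‖(a:E)‖ := by
    have := h (a:E) a.2; rwa [hPb] at this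
  have h3 : (1 - δ) * ‖(a:E)‖ ≤ ‖b‖ := by
    have hn : ‖(a:E)‖ - ‖b‖ ≤ ‖(a:E) - b‖ := by
      have := abs_norm_sub_norm_le (a:E) b
      exact (le_abs_self _).trans this
    nlinarith
  calc ‖b - (Submodule.orthogonalProjectionOnto A b : E)‖ ≤ ‖b - (a:E)‖ := proj_min A b _ a.2
    _ = ‖(a:E) - b‖ := norm_sub_rev _ _
    _ ≤ δ * ‖(a:E)‖ := h2
    _ ≤ (δ / (1 - δ)) * ‖b‖ := by
        rw [div_mul_eq_mul_div, le_div_iff₀ (by linarith)]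
        nlinarith

lemma sphere_min {f : EuclideanSpace ℝ (Fin n) → ℝ} (hc : Continuous f)
    (hpos : ∀ x : E, ‖x‖ = 1 → 0 < f x) :
    ∃ c > 0, ∀ x : E, ‖x‖ = 1 → c ≤ f x := by
  rcases Set.eq_empty_or_nonempty (Metric.sphere (0:E) 1) with hs | hs
  · refine ⟨1, one_pos, fun x hx => absurd ?_ (Set.eq_empty_iff_forall_notMem.mp hs x)⟩
    simpa using hx
  · obtain ⟨x₀, hx₀, hmin⟩ := (isCompact_sphere (0:E) 1).exists_isMinOn hs hc.continuousOn
    have hx₀n : ‖x₀‖ = 1 := by simpa using hx₀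
    exact ⟨f x₀, hpos x₀ hx₀n, fun x hx => hmin (by simpa using hx)⟩

lemma homog_bound {f : EuclideanSpace ℝ (Fin n) → ℝ} (hc : Continuous f)
    (hh : ∀ (r : ℝ) (x : E), 0 ≤ r → f (r • x) = r * f x)
    (hpos : ∀ x : E, ‖x‖ = 1 → 0 < f x) :
    ∃ c > 0, ∀ x : E, c * ‖x‖ ≤ f x := by
  obtain ⟨c, hc0, hcb⟩ := sphere_min hc hpos
  refine ⟨c, hc0, fun x => ?_⟩
  rcases eq_or_ne x 0 with rfl | hx0
  · have : f 0 = 0 := by simpa using hh 0 0 le_rfl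
    simp [this]
  · have hn : (0:ℝ) < ‖x‖ := norm_pos_iff.mpr hx0
    have hy : ‖(‖x‖⁻¹ • x)‖ = 1 := by
      rw [norm_smul, norm_inv, norm_norm, inv_mul_cancel₀ hn.ne']
    have := hcb _ hy
    rw [hh _ x (by positivity)] at this
    calc c * ‖x‖ ≤ (‖x‖⁻¹ * f x) * ‖x‖ := by nlinarith
      _ = f x := by field_simp

lemma trans_const (U V : Submodule ℝ (EuclideanSpace ℝ (Fin n))) (htrans : U ⊔ V = ⊤) :
    ∃ c > 0, ∀ x : E, c * ‖x‖ ≤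
      ‖(Submodule.orthogonalProjectionOnto U x : E)‖ + ‖(Submodule.orthogonalProjectionOnto V x : E)‖ := by
  apply homog_bound
  · exact ((continuous_subtype_val.comp (Submodule.orthogonalProjectionOnto U).continuous).norm.add
      (continuous_subtype_val.comp (Submodule.orthogonalProjectionOnto V).continuous).norm)
  · intro r x hr
    simp only [map_smul, Submodule.coe_smul, norm_smul, Real.norm_eq_abs, abs_of_nonneg hr]
    ring
  · intro x hx
    by_contra hle
    push_neg at hle
    have h1 : ‖(Submodule.orthogonalProjectionOnto U x : E)‖ = 0 ∧ ‖(Submodule.orthogonalProjectionOnto V x : E)‖ = 0 := by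
      constructor <;> nlinarith [norm_nonneg (Submodule.orthogonalProjectionOnto U x : E),
        norm_nonneg (Submodule.orthogonalProjectionOnto V x : E)]
    have hU : x ∈ Uᗮ := Submodule.orthogonalProjectionOnto_eq_zero_iff.mp
      (ZeroMemClass.coe_eq_zero.mp (norm_eq_zero.mp h1.1))
    have hV : x ∈ Vᗮ := Submodule.orthogonalProjectionOnto_eq_zero_iff.mp
      (ZeroMemClass.coe_eq_zero.mp (norm_eq_zero.mp h1.2))
    have : x ∈ (U ⊔ V)ᗮ := by
      rw [← Submodule.inf_orthogonal]; exact ⟨hU, hV⟩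
    rw [htrans, Submodule.top_orthogonal_eq_bot] at this
    simp only [Submodule.mem_bot] at this
    rw [this] at hx; simp at hx

lemma inter_const (U V : Submodule ℝ (EuclideanSpace ℝ (Fin n))) :
    ∃ c > 0, ∀ x : E,
      c * ‖x - (Submodule.orthogonalProjectionOnto (U ⊓ V) x : E)‖ ≤
        ‖x - (Submodule.orthogonalProjectionOnto U x : E)‖ + ‖x - (Submodule.orthogonalProjectionOnto V x : E)‖ := by
  set W := U ⊓ V with hW
  have hmain : ∃ c > 0, ∀ x : E, c * ‖x‖ ≤
      ‖x - (Submodule.orthogonalProjectionOnto U x : E)‖ + ‖x - (Submodule.orthogonalProjectionOnto V x : E)‖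
        + ‖(Submodule.orthogonalProjectionOnto W x : E)‖ := by
    apply homog_bound
    · have hU := continuous_subtype_val.comp (Submodule.orthogonalProjectionOnto U).continuous
      have hV := continuous_subtype_val.comp (Submodule.orthogonalProjectionOnto V).continuous
      have hWc := continuous_subtype_val.comp (Submodule.orthogonalProjectionOnto W).continuous
      exact (((continuous_id.sub hU).norm.add (continuous_id.sub hV).norm).add hWc.norm)
    · intro r x hr
      simp only [map_smul, Submodule.coe_smul, ← smul_sub, norm_smul, Real.norm_eq_abs,
        abs_of_nonneg hr]
      ring
    · intro x hx
      by_contra hle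
      push_neg at hle
      have h1 : ‖x - (Submodule.orthogonalProjectionOnto U x : E)‖ = 0 ∧
          ‖x - (Submodule.orthogonalProjectionOnto V x : E)‖ = 0 ∧
          ‖(Submodule.orthogonalProjectionOnto W x : E)‖ = 0 := by
        refine ⟨?_, ?_, ?_⟩ <;> nlinarith [norm_nonneg (x - (Submodule.orthogonalProjectionOnto U x : E)),
          norm_nonneg (x - (Submodule.orthogonalProjectionOnto V x : E)),
          norm_nonneg ((Submodule.orthogonalProjectionOnto W x : E))]
      have hxU : x ∈ U := by
        rw [← Submodule.starProjection_eq_self_iff (K := U)]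
        have := sub_eq_zero.mp (norm_eq_zero.mp h1.1)
        exact this.symm
      have hxV : x ∈ V := by
        rw [← Submodule.starProjection_eq_self_iff (K := V)]
        have := sub_eq_zero.mp (norm_eq_zero.mp h1.2.1)
        exact this.symm
      have hxW : x ∈ W := ⟨hxU, hxV⟩
      have hPW : (Submodule.orthogonalProjectionOnto W x : E) = x := Submodule.starProjection_eq_self_iff.mpr hxW
      rw [hPW, norm_eq_zero] at h1
      rw [h1.2.2] at hx
      simp at hx
  obtain ⟨c, hc0, hcb⟩ := hmain
  refine ⟨c, hc0, fun x => ?_⟩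
  set y : E := x - (Submodule.orthogonalProjectionOnto W x : E) with hy
  have hWx : (Submodule.orthogonalProjectionOnto W x : E) ∈ W := SetLike.coe_mem _
  have hPWy : (Submodule.orthogonalProjectionOnto W y : E) = 0 := by
    rw [hy, map_sub]
    simp only [Submodule.coe_sub]
    rw [show (Submodule.orthogonalProjectionOnto W (Submodule.orthogonalProjectionOnto W x : E) : E) = Submodule.orthogonalProjectionOnto W x from Submodule.starProjection_eq_self_iff.mpr hWx, sub_self]
  have hPUy : y - (Submodule.orthogonalProjectionOnto U y : E) = x - (Submodule.orthogonalProjectionOnto U x : E) := by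
    rw [hy, map_sub]
    simp only [Submodule.coe_sub]
    rw [show (Submodule.orthogonalProjectionOnto U (Submodule.orthogonalProjectionOnto W x : E) : E) = Submodule.orthogonalProjectionOnto W x from Submodule.starProjection_eq_self_iff.mpr (hW ▸ hWx : (Submodule.orthogonalProjectionOnto W x : E) ∈ U ⊓ V).1]
    abel
  have hPVy : y - (Submodule.orthogonalProjectionOnto V y : E) = x - (Submodule.orthogonalProjectionOnto V x : E) := by
    rw [hy, map_sub]
    simp only [Submodule.coe_sub]
    rw [show (Submodule.orthogonalProjectionOnto V (Submodule.orthogonalProjectionOnto W x : E) : E) = Submodule.orthogonalProjectionOnto W x from Submodule.starProjection_eq_self_iff.mpr (hW ▸ hWx : (Submodule.orthogonalProjectionOnto W x : E) ∈ U ⊓ V).2]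
    abel
  have := hcb y
  rw [hPWy, hPUy, hPVy] at this
  simpa using this

lemma angle_proj_le {K : Submodule ℝ (EuclideanSpace ℝ (Fin n))} {w : E} (hw : w ≠ 0)
    (hw' : (Submodule.orthogonalProjectionOnto K w : E) ≠ 0) :
    InnerProductGeometry.angle w (Submodule.orthogonalProjectionOnto K w : E) ≤
      (π / 2) * (‖w - (Submodule.orthogonalProjectionOnto K w : E)‖ / ‖w‖) := by
  set p : E := (Submodule.orthogonalProjectionOnto K w : E) with hp
  have hnw : (0:ℝ) < ‖w‖ := norm_pos_iff.mpr hw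
  have hnp : (0:ℝ) < ‖p‖ := norm_pos_iff.mpr hw'
  have horth : ⟪w - p, p⟫ = 0 :=
    Submodule.starProjection_inner_eq_zero w p (SetLike.coe_mem _)
  have hip : ⟪w, p⟫ = ‖p‖ ^ 2 := by
    have h2 : ⟪w, p⟫ - ⟪p, p⟫ = 0 := by
      rw [← inner_sub_left]; exact horth
    rw [real_inner_self_eq_norm_sq] at h2; linarith
  set θ := InnerProductGeometry.angle w p with hθ
  have hcos : Real.cos θ = ‖p‖ / ‖w‖ := by
    rw [hθ, InnerProductGeometry.cos_angle, hip]
    field_simp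
  have hθ0 : 0 ≤ θ := InnerProductGeometry.angle_nonneg _ _
  have hθpi : θ ≤ π := InnerProductGeometry.angle_le_pi _ _
  have hθ2 : θ ≤ π / 2 := by
    by_contra hgt
    push_neg at hgt
    have : Real.cos θ < 0 := Real.cos_neg_of_pi_div_two_lt_of_lt hgt
      (by nlinarith [Real.pi_pos])
    rw [hcos] at this
    have := div_nonneg hnp.le hnw.le
    linarith
  have hpyth : ‖w‖ ^ 2 = ‖w - p‖ ^ 2 + ‖p‖ ^ 2 := by
    have hw' : w = (w - p) + p := by abel
    calc ‖w‖ ^ 2 = ‖(w - p) + p‖ ^ 2 := by rw [← hw']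
      _ = ‖w - p‖ ^ 2 + 2 * ⟪w - p, p⟫ + ‖p‖ ^ 2 := norm_add_sq_real _ _
      _ = ‖w - p‖ ^ 2 + ‖p‖ ^ 2 := by rw [horth]; ring
  have hsin : Real.sin θ = ‖w - p‖ / ‖w‖ := by
    have hs0 : 0 ≤ Real.sin θ := Real.sin_nonneg_of_nonneg_of_le_pi hθ0 hθpi
    have hsq : Real.sin θ ^ 2 = (‖w - p‖ / ‖w‖) ^ 2 := by
      have := Real.sin_sq_add_cos_sq θ
      rw [hcos] at this
      field_simp at this ⊢
      nlinarith
    have h2 : 0 ≤ ‖w - p‖ / ‖w‖ := by positivity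
    nlinarith [sq_nonneg (Real.sin θ - ‖w - p‖ / ‖w‖), sq_nonneg (Real.sin θ + ‖w - p‖ / ‖w‖)]
  have hms := Real.mul_le_sin hθ0 hθ2
  rw [hsin] at hms
  have hπ := Real.pi_pos
  have hkey : (π / 2) * (2 / π * θ) = θ := by field_simp
  have := mul_le_mul_of_nonneg_left hms (le_of_lt (by positivity : (0:ℝ) < π / 2))
  rw [hkey] at this
  exact this

lemma div_one_sub_le {δ : ℝ} (h0 : 0 ≤ δ) (h1 : δ ≤ 1/2) : δ/(1-δ) ≤ 2*δ := by
  rw [div_le_iff₀ (by linarith)]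
  nlinarith

lemma angleToSub_bot (u : E) : angleToSub u (⊥ : Submodule ℝ E) = 0 := by
  have : {θ : ℝ | ∃ v ∈ (⊥ : Submodule ℝ E), v ≠ 0 ∧ θ = InnerProductGeometry.angle u v} = ∅ := by
    rw [Set.eq_empty_iff_forall_notMem]
    rintro θ ⟨v, hv, hv0, _⟩
    exact hv0 (Submodule.mem_bot ℝ |>.mp hv)
  rw [angleToSub, this, Real.sInf_empty]


set_option maxHeartbeats 2000000 in
/-- Let `U, V` be transversally intersecting subspaces of `ℝⁿ`
(`U + V = ℝⁿ`) with `∠_m(U,V) > ε > 0`.  Then there exist `γ₀ > 0` and a constant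
`C > 0`, depending only on `ε`, such that for all `γ < γ₀`, whenever `U'` and `V'`
are subspaces of the same dimensions as `U` and `V` respectively with
`∠_M(U,U') < γ` and `∠_M(V,V') < γ`, then `U'` and `V'` intersect transversally and
`∠_M(U ∩ V, U' ∩ V') < Cγ`. -/
theorem transverse_of_close {n : ℕ}
    (U V : Submodule ℝ (EuclideanSpace ℝ (Fin n))) (ε : ℝ) (hε : 0 < ε)
    (htrans : U ⊔ V = ⊤) (hangle : ε < minAngle U V) :
    ∃ γ₀ > 0, ∃ C > 0, ∀ γ < γ₀,
      ∀ U' V' : Submodule ℝ (EuclideanSpace ℝ (Fin n)),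
        Module.finrank ℝ U' = Module.finrank ℝ U →
        Module.finrank ℝ V' = Module.finrank ℝ V →
        maxAngle U U' < γ → maxAngle V V' < γ →
        U' ⊔ V' = ⊤ ∧ maxAngle (U ⊓ V) (U' ⊓ V') < C * γ := by
  have hπ := Real.pi_pos
  -- U and V are nontrivial
  have hU0 : U ≠ ⊥ := by
    intro hU
    have hset : {θ : ℝ | ∃ u ∈ U ⊓ (U ⊓ V)ᗮ, u ≠ 0 ∧ θ = angleToSub u (V ⊓ (U ⊓ V)ᗮ)} = ∅ := by
      rw [Set.eq_empty_iff_forall_notMem]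
      rintro θ ⟨u, hu, hu0, _⟩
      exact hu0 (Submodule.mem_bot ℝ |>.mp (by rw [hU, bot_inf_eq] at hu; exact hu))
    rw [minAngle, if_pos htrans, hset, Real.sInf_empty] at hangle
    linarith
  have hV0 : V ≠ ⊥ := by
    intro hV
    set S := {θ : ℝ | ∃ u ∈ U ⊓ (U ⊓ V)ᗮ, u ≠ 0 ∧ θ = angleToSub u (V ⊓ (U ⊓ V)ᗮ)} with hS
    have hss : ∀ θ ∈ S, θ = 0 := by
      rintro θ ⟨u, hu, hu0, rfl⟩
      have : V ⊓ (U ⊓ V)ᗮ = ⊥ := by rw [hV, bot_inf_eq]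
      rw [this, angleToSub_bot]
    have hsle : sInf S ≤ 0 := by
      rcases Set.eq_empty_or_nonempty S with h | ⟨θ, hθ⟩
      · rw [h, Real.sInf_empty]
      · have := csInf_le ⟨0, fun θ' hθ' => (hss θ' hθ').ge⟩ hθ
        rw [hss θ hθ] at this
        exact this
    rw [minAngle, if_pos htrans, ← hS] at hangle
    linarith
  -- constants from compactness
  obtain ⟨c₁, hc₁, hc₁b⟩ := trans_const U V htrans
  obtain ⟨c₂, hc₂, hc₂b⟩ := inter_const U V
  refine ⟨min (c₁ / 3) (min (c₂ / 16) (1 / 2)), by positivity, 4 * π / c₂ + 1, by positivity,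
    ?_⟩
  intro γ hγ U' V' hdU hdV hmU hmV
  have hγ1 : γ < c₁ / 3 := lt_of_lt_of_le hγ (min_le_left _ _)
  have hγ2 : γ < c₂ / 16 := lt_of_lt_of_le hγ ((min_le_right _ _).trans (min_le_left _ _))
  have hγ3 : γ < 1 / 2 := lt_of_lt_of_le hγ ((min_le_right _ _).trans (min_le_right _ _))
  have hγ0 : 0 < γ := lt_of_le_of_lt (maxAngle_nonneg U U') hmU
  have hU'0 : U' ≠ ⊥ := by
    intro h
    apply hU0
    rw [h, finrank_bot] at hdU
    exact Submodule.finrank_eq_zero.mp hdU.symm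
  have hV'0 : V' ≠ ⊥ := by
    intro h
    apply hV0
    rw [h, finrank_bot] at hdV
    exact Submodule.finrank_eq_zero.mp hdV.symm
  have hAU : ∀ u ∈ U, ‖u - (Submodule.orthogonalProjectionOnto U' u : EuclideanSpace ℝ (Fin n))‖ ≤ γ * ‖u‖ :=
    fun u hu => close_of_maxAngle_lt hU'0 hmU hu
  have hAV : ∀ v ∈ V, ‖v - (Submodule.orthogonalProjectionOnto V' v : EuclideanSpace ℝ (Fin n))‖ ≤ γ * ‖v‖ :=
    fun v hv => close_of_maxAngle_lt hV'0 hmV hv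
  -- transversality of U', V'
  have htop : U' ⊔ V' = ⊤ := by
    by_contra hne
    have hbot : (U' ⊔ V')ᗮ ≠ ⊥ := fun h => hne (Submodule.orthogonal_eq_bot_iff.mp h)
    obtain ⟨z, hz, hz0⟩ := (Submodule.ne_bot_iff _).mp hbot
    have hznorm : (0:ℝ) < ‖z‖ := norm_pos_iff.mpr hz0
    have key : ∀ (S S' : Submodule ℝ (EuclideanSpace ℝ (Fin n))), S' ≤ U' ⊔ V' →
        (∀ u ∈ S, ‖u - (Submodule.orthogonalProjectionOnto S' u : EuclideanSpace ℝ (Fin n))‖ ≤ γ * ‖u‖) →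
        ‖(Submodule.orthogonalProjectionOnto S z : EuclideanSpace ℝ (Fin n))‖ ≤ γ * ‖z‖ := by
      intro S S' hle hA
      set a : EuclideanSpace ℝ (Fin n) := (Submodule.orthogonalProjectionOnto S z : EuclideanSpace ℝ (Fin n)) with ha
      have haS : a ∈ S := SetLike.coe_mem _
      have h1 : ⟪z, a⟫ = ‖a‖ ^ 2 := by
        have h0 : ⟪z - a, a⟫ = 0 := Submodule.starProjection_inner_eq_zero z a haS
        rw [inner_sub_left] at h0
        rw [real_inner_self_eq_norm_sq] at h0
        linarith
      set a' : EuclideanSpace ℝ (Fin n) := (Submodule.orthogonalProjectionOnto S' a : EuclideanSpace ℝ (Fin n)) with ha'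
      have h2 : ⟪z, a'⟫ = 0 := by
        rw [real_inner_comm]
        exact (Submodule.mem_orthogonal _ z).mp hz a' (hle (SetLike.coe_mem _))
      have h3 : ‖a‖ ^ 2 = ⟪z, a - a'⟫ := by
        rw [inner_sub_right, h1, h2]; ring
      have h4 : ⟪z, a - a'⟫ ≤ ‖z‖ * ‖a - a'‖ := real_inner_le_norm _ _
      have h5 : ‖a - a'‖ ≤ γ * ‖a‖ := hA a haS
      rcases eq_or_ne a 0 with h | h
      · rw [h]; simp; positivity
      · have hna : (0:ℝ) < ‖a‖ := norm_pos_iff.mpr h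
        nlinarith
    have hPU := key U U' le_sup_left hAU
    have hPV := key V V' le_sup_right hAV
    have := hc₁b z
    nlinarith
  refine ⟨htop, ?_⟩
  -- dimension count
  have e1 := Submodule.finrank_sup_add_finrank_inf_eq U V
  have e2 := Submodule.finrank_sup_add_finrank_inf_eq U' V'
  rw [htrans] at e1
  rw [htop] at e2
  have hdK : Module.finrank ℝ ↥(U' ⊓ V') = Module.finrank ℝ ↥(U ⊓ V) := by omega
  -- gap symmetry step 1
  have hg1 : ∀ x ∈ U', ‖x - (Submodule.orthogonalProjectionOnto U x : EuclideanSpace ℝ (Fin n))‖ ≤ (2 * γ) * ‖x‖ := by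
    intro x hx
    refine (gap_symm hdU.symm hγ0.le (by linarith) hAU x hx).trans ?_
    have : γ / (1 - γ) ≤ 2 * γ := div_one_sub_le hγ0.le (by linarith)
    exact mul_le_mul_of_nonneg_right this (norm_nonneg _)
  have hg2 : ∀ x ∈ V', ‖x - (Submodule.orthogonalProjectionOnto V x : EuclideanSpace ℝ (Fin n))‖ ≤ (2 * γ) * ‖x‖ := by
    intro x hx
    refine (gap_symm hdV.symm hγ0.le (by linarith) hAV x hx).trans ?_
    have : γ / (1 - γ) ≤ 2 * γ := div_one_sub_le hγ0.le (by linarith)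
    exact mul_le_mul_of_nonneg_right this (norm_nonneg _)
  -- elements of U' ⊓ V' are close to U ⊓ V
  have hg3 : ∀ x ∈ U' ⊓ V', ‖x - (Submodule.orthogonalProjectionOnto (U ⊓ V) x : EuclideanSpace ℝ (Fin n))‖ ≤ (4 * γ / c₂) * ‖x‖ := by
    intro x hx
    have h1 := hc₂b x
    have h2 := hg1 x hx.1
    have h3 := hg2 x hx.2
    rw [div_mul_eq_mul_div, le_div_iff₀ hc₂]
    nlinarith
  -- gap symmetry step 2
  have hδ1 : 4 * γ / c₂ ≤ 1 / 4 := by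
    rw [div_le_iff₀ hc₂]; nlinarith
  have hg4 : ∀ w ∈ U ⊓ V, ‖w - (Submodule.orthogonalProjectionOnto (U' ⊓ V') w : EuclideanSpace ℝ (Fin n))‖ ≤ (8 * γ / c₂) * ‖w‖ := by
    intro w hw
    refine (gap_symm hdK (by positivity) (by linarith) hg3 w hw).trans ?_
    have hd2 : (4 * γ / c₂) / (1 - 4 * γ / c₂) ≤ 8 * γ / c₂ := by
      have := div_one_sub_le (by positivity : (0:ℝ) ≤ 4 * γ / c₂) (by linarith)
      linarith [this, (by ring : 8 * γ / c₂ = 2 * (4 * γ / c₂))]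
    exact mul_le_mul_of_nonneg_right hd2 (norm_nonneg _)
  -- angle bound
  have hδ2 : 8 * γ / c₂ ≤ 1 / 2 := by
    rw [div_le_iff₀ hc₂]; nlinarith
  refine lt_of_le_of_lt (maxAngle_le (by positivity : (0:ℝ) ≤ 4 * π / c₂ * γ) ?_) ?_
  · intro w hw hw0
    set p : EuclideanSpace ℝ (Fin n) := (Submodule.orthogonalProjectionOnto (U' ⊓ V') w : EuclideanSpace ℝ (Fin n)) with hp
    have hnw : (0:ℝ) < ‖w‖ := norm_pos_iff.mpr hw0
    have hd := hg4 w hw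
    have hp0 : p ≠ 0 := by
      intro h
      rw [← hp, h, sub_zero] at hd
      nlinarith
    refine (angleToSub_le_angle w (SetLike.coe_mem _) hp0).trans
      ((angle_proj_le hw0 hp0).trans ?_)
    have hq : ‖w - p‖ / ‖w‖ ≤ 8 * γ / c₂ := by
      rw [div_le_iff₀ hnw]
      calc ‖w - p‖ ≤ (8 * γ / c₂) * ‖w‖ := hd
        _ = 8 * γ / c₂ * ‖w‖ := by ring
    calc π / 2 * (‖w - p‖ / ‖w‖) ≤ π / 2 * (8 * γ / c₂) :=
          mul_le_mul_of_nonneg_left hq (by positivity)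
      _ = 4 * π / c₂ * γ := by field_simp; ring
  · nlinarith [div_pos (by positivity : (0:ℝ) < 4 * π) hc₂]
end

section
/- Let V, W be complex vector spaces of dimensions m and n with m ≥ n. If φ₀, φ₁: V → W are surjective linear maps with Λ^n φ₀ = Λ^n φ₁, then ker φ₀ = ker φ₁, there exists A ∈ SL(W) with A∘φ₀ = φ₁, and consequently φ₀ and φ₁ are joined by a continuous path φ_t of surjective maps with Λ^n φ_t = Λ^n φ₀ for all t. -/
open ExteriorAlgebra

/-- The `n`-th exterior power `⋀ⁿ f : ⋀ⁿ M → ⋀ⁿ N` of a linear map `f : M → N`,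
determined by `(⋀ⁿ f)(v₁∧⋯∧vₙ) = f(v₁)∧⋯∧f(vₙ)`. -/
noncomputable def extPowMap {R M N : Type*} [CommRing R] [AddCommGroup M] [Module R M]
    [AddCommGroup N] [Module R N] (n : ℕ) (f : M →ₗ[R] N) :
    ⋀[R]^n M →ₗ[R] ⋀[R]^n N :=
  (ExteriorAlgebra.map f).toLinearMap.restrict (p := ⋀[R]^n M) (q := ⋀[R]^n N)
    (fun x hx => by
      have hpow : ∀ k : ℕ, (Submodule.map (ι R) (LinearMap.range f)) ^ k ≤
          (LinearMap.range (ι R (M := N))) ^ k := by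
        intro k
        induction k with
        | zero => exact le_rfl
        | succ k ih =>
            rw [pow_succ, pow_succ]
            exact mul_le_mul' ih (LinearMap.map_le_range)
      have hle : Submodule.map (ExteriorAlgebra.map f).toLinearMap (⋀[R]^n M) ≤ ⋀[R]^n N := by
        rw [show (⋀[R]^n M) = (LinearMap.range (ι R (M := M))) ^ n from rfl,
          Submodule.map_pow, ExteriorAlgebra.ι_range_map_map]
        exact hpow n
      exact hle (Submodule.mem_map_of_mem hx))

section Aux
open Matrix

variable {n : ℕ}

lemma alt_apply_eq_det_smul {W N : Type*} [AddCommGroup W] [Module ℂ W]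
    [AddCommGroup N] [Module ℂ N] (e : Module.Basis (Fin n) ℂ W)
    (f : W [⋀^Fin n]→ₗ[ℂ] N) (v : Fin n → W) : f v = e.det v • f ⇑e := by
  classical
  have h : f = (e.det).smulRight (f ⇑e) := by
    refine Module.Basis.ext_alternating e fun i hinj => ?_
    let σ : Equiv.Perm (Fin n) := Equiv.ofBijective i (Finite.injective_iff_bijective.1 hinj)
    have h1 : (fun j => e (i j)) = ⇑e ∘ σ := rfl
    rw [h1, AlternatingMap.map_perm]
    show _ = e.det (⇑e ∘ σ) • f ⇑e
    rw [AlternatingMap.map_perm, Module.Basis.det_self]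
    simp
  nth_rewrite 1 [h]
  rfl

lemma extPowMap_coe {R M N : Type*} [CommRing R] [AddCommGroup M] [Module R M]
    [AddCommGroup N] [Module R N] (n : ℕ) (f : M →ₗ[R] N) (x : ⋀[R]^n M) :
    (extPowMap n f x : ExteriorAlgebra R N) = ExteriorAlgebra.map f (x : ExteriorAlgebra R M) :=
  rfl

lemma iMulti_comp_eq_det_smul (n : ℕ) (B : (Fin n → ℂ) →ₗ[ℂ] (Fin n → ℂ))
    (v : Fin n → (Fin n → ℂ)) :
    ιMulti ℂ n (⇑B ∘ v) = LinearMap.det B • ιMulti ℂ n v := by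
  classical
  set e := Pi.basisFun ℂ (Fin n)
  rw [alt_apply_eq_det_smul e (ιMulti ℂ n) (⇑B ∘ v), alt_apply_eq_det_smul e (ιMulti ℂ n) v,
    Module.Basis.det_comp, smul_smul]

lemma iMulti_basis_ne_zero (n : ℕ) {W : Type*} [AddCommGroup W] [Module ℂ W]
    (e : Module.Basis (Fin n) ℂ W) : ιMulti ℂ n ⇑e ≠ 0 := by
  classical
  intro h
  have := congrArg (liftAlternating (R := ℂ) (M := W) (N := ℂ)
    (Function.update (fun i => (0 : W [⋀^Fin i]→ₗ[ℂ] ℂ)) n e.det)) h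
  rw [liftAlternating_apply_ιMulti, map_zero, Function.update_self, Module.Basis.det_self] at this
  exact one_ne_zero this

lemma ker_le_of_extPow_eq (m n : ℕ) (φ ψ : (Fin m → ℂ) →ₗ[ℂ] (Fin n → ℂ))
    (hψ : Function.Surjective ψ) (heq : extPowMap n φ = extPowMap n ψ) :
    LinearMap.ker φ ≤ LinearMap.ker ψ := by
  classical
  intro v hv
  rw [LinearMap.mem_ker] at hv ⊢
  by_contra hne
  obtain ⟨k, hk⟩ : ∃ k, ψ v k ≠ 0 := by
    by_contra h; push_neg at h; exact hne (funext h)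
  set e := Pi.basisFun ℂ (Fin n) with he
  set u : Fin n → (Fin m → ℂ) :=
    Function.update (fun j => Function.surjInv hψ (e j)) k v with hu
  have hψu : ⇑ψ ∘ u = Function.update (⇑e) k (ψ v) := by
    funext j
    by_cases hj : j = k
    · subst hj; simp [u]
    · simp [u, hj, Function.surjInv_eq hψ]
  have hφu0 : ιMulti ℂ n (⇑φ ∘ u) = 0 := by
    have h5 : (⇑φ ∘ u) k = 0 := by simp [u, hv]
    exact AlternatingMap.map_coord_zero _ k h5
  have hmem : ιMulti ℂ n u ∈ ⋀[ℂ]^n (Fin m → ℂ) :=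
    ExteriorAlgebra.ιMulti_range ℂ n (Set.mem_range_self u)
  have happ := congrArg (fun g => (g ⟨ιMulti ℂ n u, hmem⟩ : ExteriorAlgebra ℂ (Fin n → ℂ))) heq
  simp only [extPowMap_coe] at happ
  rw [ExteriorAlgebra.map_apply_ιMulti, ExteriorAlgebra.map_apply_ιMulti, hφu0, hψu] at happ
  have hdet : e.det (Function.update (⇑e) k (ψ v)) ≠ 0 := by
    have h6 : e.det (Function.update (⇑e) k (ψ v)) = ψ v k := by
      rw [Module.Basis.det_apply]
      have hM : e.toMatrix (Function.update (⇑e) k (ψ v)) =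
          Matrix.updateCol 1 k (ψ v) := by
        ext i j
        by_cases hj : j = k <;>
          simp [Module.Basis.toMatrix_apply, e, hj, Matrix.updateCol_apply, Matrix.one_apply, eq_comm, Pi.single_apply]
      rw [hM]
      rw [← Matrix.cramer_apply, Matrix.cramer_one]
      rfl
    rw [h6]; exact hk
  have h8 : ιMulti ℂ n (Function.update (⇑e) k (ψ v)) ≠ 0 := by
    rw [alt_apply_eq_det_smul e]
    exact smul_ne_zero hdet (iMulti_basis_ne_zero n e)
  exact h8 happ.symm

lemma extPow_comp_det_one (m n : ℕ) (T : (Fin n → ℂ) →ₗ[ℂ] (Fin n → ℂ))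
    (hT : LinearMap.det T = 1) (φ : (Fin m → ℂ) →ₗ[ℂ] (Fin n → ℂ)) :
    extPowMap n (T ∘ₗ φ) = extPowMap n φ := by
  apply LinearMap.ext
  intro x
  apply Subtype.ext
  rw [extPowMap_coe, extPowMap_coe]
  have hx : (x : ExteriorAlgebra ℂ (Fin m → ℂ)) ∈
      Submodule.span ℂ (Set.range (ιMulti ℂ n)) := by
    rw [ExteriorAlgebra.ιMulti_span_fixedDegree]; exact x.2
  refine LinearMap.eqOn_span' (f := (ExteriorAlgebra.map (T ∘ₗ φ)).toLinearMap)
    (g := (ExteriorAlgebra.map φ).toLinearMap) ?_ hx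
  rintro y ⟨u, rfl⟩
  show ExteriorAlgebra.map (T ∘ₗ φ) (ιMulti ℂ n u) = ExteriorAlgebra.map φ (ιMulti ℂ n u)
  rw [ExteriorAlgebra.map_apply_ιMulti, ExteriorAlgebra.map_apply_ιMulti]
  have h1 : ⇑(T ∘ₗ φ) ∘ u = ⇑T ∘ (⇑φ ∘ u) := rfl
  rw [h1, iMulti_comp_eq_det_smul n T, hT, one_smul]

lemma exists_det_one_comp_eq (m n : ℕ) (φ₀ φ₁ : (Fin m → ℂ) →ₗ[ℂ] (Fin n → ℂ))
    (h0 : Function.Surjective φ₀) (h1 : Function.Surjective φ₁)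
    (heq : extPowMap n φ₀ = extPowMap n φ₁)
    (hker : LinearMap.ker φ₀ = LinearMap.ker φ₁) :
    ∃ A : (Fin n → ℂ) →ₗ[ℂ] (Fin n → ℂ), LinearMap.det A = 1 ∧ A.comp φ₀ = φ₁ := by
  classical
  let e₀ := φ₀.quotKerEquivOfSurjective h0
  let e₁ := φ₁.quotKerEquivOfSurjective h1
  let q := Submodule.quotEquivOfEq _ _ hker
  let A : (Fin n → ℂ) ≃ₗ[ℂ] (Fin n → ℂ) := e₀.symm ≪≫ₗ q ≪≫ₗ e₁
  have he₀ : ∀ v, e₀ (Submodule.Quotient.mk v) = φ₀ v := fun v => rfl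
  have he₁ : ∀ v, e₁ (Submodule.Quotient.mk v) = φ₁ v := fun v => rfl
  have hcomp : A.toLinearMap.comp φ₀ = φ₁ := by
    apply LinearMap.ext
    intro v
    have h2 : e₀.symm (φ₀ v) = Submodule.Quotient.mk v := by
      rw [← he₀ v, LinearEquiv.symm_apply_apply]
    show A (φ₀ v) = φ₁ v
    show e₁ (q (e₀.symm (φ₀ v))) = φ₁ v
    rw [h2]
    rw [show q (Submodule.Quotient.mk v) = Submodule.Quotient.mk v from
      Submodule.quotEquivOfEq_mk _ _ hker v]
    exact he₁ v
  refine ⟨A.toLinearMap, ?_, hcomp⟩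
  -- determinant is one
  set e := Pi.basisFun ℂ (Fin n) with he
  let u : Fin n → (Fin m → ℂ) := fun j => Function.surjInv h0 (e j)
  have hu0 : ⇑φ₀ ∘ u = ⇑e := funext fun j => Function.surjInv_eq h0 (e j)
  have hu1 : ⇑φ₁ ∘ u = ⇑(A.toLinearMap) ∘ ⇑e := by
    funext j
    have := congrArg (fun f => f (u j)) hcomp
    simp only [LinearMap.comp_apply] at this
    simp [← this, Function.comp, hu0 ▸ congrFun hu0 j]
    rw [show φ₀ (u j) = e j from congrFun hu0 j]
  have hmem : ιMulti ℂ n u ∈ ⋀[ℂ]^n (Fin m → ℂ) :=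
    ExteriorAlgebra.ιMulti_range ℂ n (Set.mem_range_self u)
  have happ := congrArg (fun g => (g ⟨ιMulti ℂ n u, hmem⟩ : ExteriorAlgebra ℂ (Fin n → ℂ))) heq
  simp only [extPowMap_coe] at happ
  rw [ExteriorAlgebra.map_apply_ιMulti, ExteriorAlgebra.map_apply_ιMulti, hu0, hu1,
    iMulti_comp_eq_det_smul n A.toLinearMap] at happ
  have hne := iMulti_basis_ne_zero n e
  have h3 : (LinearMap.det A.toLinearMap - 1) • ιMulti ℂ n ⇑e = 0 := by
    rw [sub_smul, one_smul, ← happ, sub_self]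
  rcases smul_eq_zero.1 h3 with h4 | h4
  · linear_combination (norm := ring_nf) h4  -- det - 1 = 0
  · exact absurd h4 hne

lemma transvec_prod_det (n : ℕ) (t : ℂ) (L : List (TransvectionStruct (Fin n) ℂ)) :
    ((L.map fun ts => transvection ts.i ts.j (t * ts.c)).prod).det = 1 := by
  induction L with
  | nil => simp
  | cons a l ih => simp [Matrix.det_mul, ih, Matrix.det_transvection_of_ne _ _ a.hij]

lemma transvec_prod_zero (n : ℕ) (L : List (TransvectionStruct (Fin n) ℂ)) :
    ((L.map fun ts => transvection ts.i ts.j ((0:ℂ) * ts.c)).prod) = 1 := by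
  induction L with
  | nil => simp
  | cons a l ih => simp [ih]

lemma transvec_prod_one (n : ℕ) (L : List (TransvectionStruct (Fin n) ℂ)) :
    ((L.map fun ts => transvection ts.i ts.j ((1:ℂ) * ts.c)).prod) =
      (L.map TransvectionStruct.toMatrix).prod := by
  congr 1
  apply List.map_congr_left
  intro a _
  simp [TransvectionStruct.toMatrix]

lemma transvec_prod_continuous (n : ℕ) (L : List (TransvectionStruct (Fin n) ℂ)) :
    Continuous fun t : ℝ =>
      ((L.map fun ts => transvection ts.i ts.j ((t:ℂ) * ts.c)).prod) := by
  induction L with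
  | nil => simpa using continuous_const
  | cons a l ih =>
      simp only [List.map_cons, List.prod_cons]
      refine Continuous.matrix_mul ?_ ih
      have h1 : Continuous fun t : ℝ => ((t:ℂ) * a.c) :=
        Complex.continuous_ofReal.mul continuous_const
      have h2 : Continuous fun t : ℝ => Matrix.single a.i a.j ((t:ℂ) * a.c) := by
        have : ∀ t : ℝ, Matrix.single a.i a.j ((t:ℂ) * a.c) =
            ((t:ℂ) * a.c) • Matrix.single a.i a.j (1:ℂ) := by
          intro t; rw [Matrix.smul_single, smul_eq_mul, mul_one]
        simp only [this]
        exact h1.smul continuous_const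
      exact continuous_const.add h2

lemma exists_path_SL (n : ℕ) (A : (Fin n → ℂ) →ₗ[ℂ] (Fin n → ℂ))
    (hA : LinearMap.det A = 1) :
    ∃ B : ℝ → ((Fin n → ℂ) →ₗ[ℂ] (Fin n → ℂ)),
      B 0 = LinearMap.id ∧ B 1 = A ∧ (∀ w, Continuous fun t => B t w) ∧
      ∀ t, LinearMap.det (B t) = 1 ∧ Function.Surjective (B t) := by
  classical
  rcases Nat.eq_zero_or_pos n with hn | hn
  · subst hn
    refine ⟨fun _ => LinearMap.id, rfl, ?_, fun w => continuous_const,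
      fun t => ⟨LinearMap.det_id, Function.surjective_id⟩⟩
    apply LinearMap.ext; intro v; exact Subsingleton.elim _ _
  obtain ⟨L, L', D, hM⟩ :=
    Matrix.Pivot.exists_list_transvec_mul_diagonal_mul_list_transvec (LinearMap.toMatrix' A)
  have hdetA : (LinearMap.toMatrix' A).det = 1 := by
    rw [LinearMap.det_toMatrix']; exact hA
  have hprodD : ∏ i, D i = 1 := by
    have h1 := hdetA
    rw [hM] at h1
    simpa [Matrix.det_mul, TransvectionStruct.det_toMatrix_prod, Matrix.det_diagonal] using h1
  have hD : ∀ i, D i ≠ 0 := by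
    intro i
    refine Finset.prod_ne_zero_iff.1 ?_ i (Finset.mem_univ i)
    rw [hprodD]; exact one_ne_zero
  set dg : ℝ → Fin n → ℂ := fun t i => Complex.exp ((t:ℂ) * Complex.log (D i)) with hdg
  set g : ℝ → Matrix (Fin n) (Fin n) ℂ := fun t =>
    (L.map fun ts => transvection ts.i ts.j ((t:ℂ) * ts.c)).prod * Matrix.diagonal (dg t) *
    (L'.map fun ts => transvection ts.i ts.j ((t:ℂ) * ts.c)).prod with hg
  have hgdet : ∀ t, (g t).det = ∏ i, dg t i := by
    intro t
    simp [hg, Matrix.det_mul, transvec_prod_det, Matrix.det_diagonal]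
  have hgdet_ne : ∀ t, (g t).det ≠ 0 := by
    intro t
    rw [hgdet]
    exact Finset.prod_ne_zero_iff.2 fun i _ => Complex.exp_ne_zero _
  have hdgcont : Continuous dg :=
    continuous_pi fun i => Complex.continuous_exp.comp
      (Complex.continuous_ofReal.mul continuous_const)
  have hgcont : Continuous g :=
    ((transvec_prod_continuous n L).matrix_mul
      (hdgcont.matrix_diagonal)).matrix_mul (transvec_prod_continuous n L')
  have hg0 : g 0 = 1 := by
    have hd0 : dg 0 = fun _ => 1 := by
      funext i; simp [hdg]
    rw [hg]
    simp only [Complex.ofReal_zero, hd0]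
    rw [transvec_prod_zero, transvec_prod_zero, Matrix.diagonal_one]
    simp
  have hg1 : g 1 = LinearMap.toMatrix' A := by
    have hd1 : dg 1 = D := by
      funext i; simp [hdg, Complex.exp_log (hD i)]
    rw [hg]
    simp only [Complex.ofReal_one, hd1]
    rw [transvec_prod_one, transvec_prod_one, ← hM]
  set j0 : Fin n := ⟨0, hn⟩
  set c : ℝ → ℂ := fun t => ((g t).det)⁻¹ with hc
  have hccont : Continuous c := (hgcont.matrix_det).inv₀ hgdet_ne
  set dia : ℝ → Matrix (Fin n) (Fin n) ℂ := fun t =>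
    Matrix.diagonal (Function.update (fun _ : Fin n => (1:ℂ)) j0 (c t)) with hdia
  have hdiacont : Continuous dia := by
    refine Continuous.matrix_diagonal (continuous_pi fun i => ?_)
    by_cases hi : i = j0
    · subst hi
      simpa [Function.update_self] using hccont
    · simpa [Function.update_of_ne hi] using continuous_const
  set B : ℝ → Matrix (Fin n) (Fin n) ℂ := fun t => g t * dia t with hB
  have hBcont : Continuous B := hgcont.matrix_mul hdiacont
  have hBdet : ∀ t, (B t).det = 1 := by
    intro t
    rw [hB]
    simp only [Matrix.det_mul, hdia, Matrix.det_diagonal]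
    rw [Finset.prod_update_of_mem (Finset.mem_univ j0)]
    simp only [Finset.prod_const_one, mul_one]
    exact mul_inv_cancel₀ (hgdet_ne t)
  have hB0 : B 0 = 1 := by
    rw [hB]
    simp only [hdia, hc, hg0, Matrix.det_one, inv_one]
    rw [show Function.update (fun _ : Fin n => (1:ℂ)) j0 1 = fun _ => 1 from
      Function.update_eq_self j0 (fun _ => (1:ℂ)), Matrix.diagonal_one, one_mul]
  have hB1 : B 1 = LinearMap.toMatrix' A := by
    rw [hB]
    simp only [hdia, hc, hg1, hdetA, inv_one]
    rw [show Function.update (fun _ : Fin n => (1:ℂ)) j0 1 = fun _ => 1 from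
      Function.update_eq_self j0 (fun _ => (1:ℂ)), Matrix.diagonal_one, mul_one]
  refine ⟨fun t => Matrix.toLin' (B t), ?_, ?_, ?_, ?_⟩
  · show Matrix.toLin' (B 0) = LinearMap.id
    rw [hB0]; exact Matrix.toLin'_one
  · show Matrix.toLin' (B 1) = A
    rw [hB1]; exact Matrix.toLin'_toMatrix' A
  · intro w
    have : ∀ t, Matrix.toLin' (B t) w = (B t) *ᵥ w := fun t => Matrix.toLin'_apply _ _
    simp only [this]
    exact hBcont.matrix_mulVec continuous_const
  · intro t
    refine ⟨by rw [LinearMap.det_toLin']; exact hBdet t, ?_⟩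
    intro w
    refine ⟨Matrix.toLin' (B t)⁻¹ w, ?_⟩
    have h2 : B t * (B t)⁻¹ = 1 :=
      Matrix.mul_nonsing_inv _ (by rw [hBdet t]; exact isUnit_one)
    have h3 := congrArg (fun M => Matrix.toLin' M w) h2
    simp only [Matrix.toLin'_mul] at h3
    simpa [Matrix.toLin'_one] using h3

end Aux
/-- Let `V = ℂᵐ`, `W = ℂⁿ` with `m ≥ n`.  If `φ₀, φ₁ : V → W` are
surjective linear maps with `⋀ⁿφ₀ = ⋀ⁿφ₁`, then `ker φ₀ = ker φ₁`, there exists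
`A ∈ SL(W)` (an endomorphism of determinant one) with `A∘φ₀ = φ₁`, and consequently
`φ₀` and `φ₁` are joined by a continuous path `φ_t` of surjective maps with
`⋀ⁿφ_t = ⋀ⁿφ₀` for all `t`. -/
theorem exteriorPower_fibre_connected (m n : ℕ) (hmn : n ≤ m)
    (φ₀ φ₁ : (Fin m → ℂ) →ₗ[ℂ] (Fin n → ℂ))
    (h0 : Function.Surjective φ₀) (h1 : Function.Surjective φ₁)
    (heq : extPowMap n φ₀ = extPowMap n φ₁) :
    LinearMap.ker φ₀ = LinearMap.ker φ₁ ∧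
    (∃ A : (Fin n → ℂ) →ₗ[ℂ] (Fin n → ℂ), LinearMap.det A = 1 ∧ A.comp φ₀ = φ₁) ∧
    ∃ ψ : ℝ → ((Fin m → ℂ) →ₗ[ℂ] (Fin n → ℂ)),
      ψ 0 = φ₀ ∧ ψ 1 = φ₁ ∧ (∀ v, Continuous fun t => ψ t v) ∧
      ∀ t : ℝ, Function.Surjective (ψ t) ∧ extPowMap n (ψ t) = extPowMap n φ₀ := by
  have hker : LinearMap.ker φ₀ = LinearMap.ker φ₁ :=
    le_antisymm (ker_le_of_extPow_eq m n φ₀ φ₁ h1 heq)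
      (ker_le_of_extPow_eq m n φ₁ φ₀ h0 heq.symm)
  obtain ⟨A, hAdet, hAcomp⟩ := exists_det_one_comp_eq m n φ₀ φ₁ h0 h1 heq hker
  obtain ⟨B, hB0, hB1, hBcont, hBt⟩ := exists_path_SL n A hAdet
  refine ⟨hker, ⟨A, hAdet, hAcomp⟩, fun t => (B t).comp φ₀, ?_, ?_, ?_, ?_⟩
  · show B 0 ∘ₗ φ₀ = φ₀
    rw [hB0]; exact LinearMap.id_comp φ₀
  · show B 1 ∘ₗ φ₀ = φ₁
    rw [hB1]; exact hAcomp
  · intro v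
    exact hBcont (φ₀ v)
  · intro t
    constructor
    · rw [LinearMap.coe_comp]
      exact ((hBt t).2).comp h0
    · exact extPow_comp_det_one m n (B t) (hBt t).1 φ₀
end
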